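/- arXiv:1407.1275 — 11 statements merged into one kernel-verified Lean document; each statement's English description precedes it below -/
import Mathlib

section
/- Let T be a power-bounded d×d matrix. Then the Cesàro asymptotic limit A_{T,C} := lim_{n→∞} (1/n)·∑_{j=1}^n T^{*j} T^j exists (entry-wise limit of matrices). -/
open Filter

open scoped Matrix Matrix.Norms.L2Operator

/-- For a power-bounded `d × d` complex matrix `T`, the Cesàro asymptotic limit
`A_{T,C} = lim_{n→∞} (1/n) ∑_{j=1}^n T^{*j} T^j` exists. -/
theorem cesaro_asymptotic_limit_exists (d : ℕ) (T : Matrix (Fin d) (Fin d) ℂ)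
    (hpb : ∃ M > 0, ∀ n : ℕ, ‖T ^ n‖ < M) :
    ∃ A : Matrix (Fin d) (Fin d) ℂ,
      Tendsto (fun n : ℕ =>
          ((n : ℂ)⁻¹ • ∑ j ∈ Finset.range n, (T ^ (j + 1))ᴴ * T ^ (j + 1)))
        atTop (nhds A) := by
  classical
  obtain ⟨M, hM, hbd⟩ := hpb
  set L : Module.End ℂ (Matrix (Fin d) (Fin d) ℂ) :=
    (LinearMap.mulRight ℂ T).comp (LinearMap.mulLeft ℂ Tᴴ) with hL
  have hLapp : ∀ X : Matrix (Fin d) (Fin d) ℂ, L X = Tᴴ * X * T := fun X => rfl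
  have hLpow : ∀ (n : ℕ) (X : Matrix (Fin d) (Fin d) ℂ),
      (L ^ n) X = (T ^ n)ᴴ * X * T ^ n := by
    intro n
    induction n with
    | zero => intro X; simp
    | succ n ih =>
      intro X
      rw [pow_succ', Module.End.mul_apply, ih, hLapp, pow_succ T n,
        Matrix.conjTranspose_mul]
      simp [Matrix.mul_assoc]
  have hbound : ∀ (n : ℕ) (X : Matrix (Fin d) (Fin d) ℂ),
      ‖(L ^ n) X‖ ≤ M * M * ‖X‖ := by
    intro n X
    rw [hLpow]
    have h1 : ‖(T ^ n)ᴴ * X * T ^ n‖ ≤ ‖(T ^ n)ᴴ * X‖ * ‖T ^ n‖ :=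
      Matrix.l2_opNorm_mul _ _
    have h2 : ‖(T ^ n)ᴴ * X‖ ≤ ‖(T ^ n)ᴴ‖ * ‖X‖ := Matrix.l2_opNorm_mul _ _
    have h3 : ‖(T ^ n)ᴴ‖ = ‖T ^ n‖ := Matrix.l2_opNorm_conjTranspose _
    have h4 := (hbd n).le
    calc ‖(T ^ n)ᴴ * X * T ^ n‖ ≤ ‖(T ^ n)ᴴ * X‖ * ‖T ^ n‖ := h1
      _ ≤ ‖T ^ n‖ * ‖X‖ * ‖T ^ n‖ :=
          mul_le_mul_of_nonneg_right (h3 ▸ h2) (norm_nonneg _)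
      _ ≤ M * ‖X‖ * M :=
          mul_le_mul (mul_le_mul_of_nonneg_right h4 (norm_nonneg X)) h4
            (norm_nonneg _) (mul_nonneg hM.le (norm_nonneg X))
      _ = M * M * ‖X‖ := by ring
  set g : Module.End ℂ (Matrix (Fin d) (Fin d) ℂ) := L - 1 with hg
  have hdisj : Disjoint (LinearMap.ker g) (LinearMap.range g) := by
    rw [Submodule.disjoint_def]
    rintro x hxk ⟨y, rfl⟩
    have hgy : g y = L y - y := by simp [hg]
    have hfix : L (g y) = g y := by
      have hx := LinearMap.mem_ker.mp hxk
      have h0 : L (g y) - g y = 0 := by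
        simpa [hg, LinearMap.sub_apply, Module.End.one_apply] using hx
      linear_combination (norm := module) h0
    have key : ∀ n : ℕ, (L ^ n) y = y + (n : ℂ) • g y := by
      intro n
      induction n with
      | zero => simp
      | succ n ih =>
        rw [pow_succ', Module.End.mul_apply, ih, map_add, map_smul, hfix, hgy]
        push_cast
        module
    have hCle : ∀ n : ℕ, (n : ℝ) * ‖g y‖ ≤ M * M * ‖y‖ + ‖y‖ := by
      intro n
      have h1 : ‖(L ^ n) y - y‖ ≤ M * M * ‖y‖ + ‖y‖ := le_trans
        (norm_sub_le _ _) (by have := hbound n y; linarith)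
      have h2 : (L ^ n) y - y = (n : ℂ) • g y := by rw [key n]; abel
      have h3 : ‖(n : ℂ) • g y‖ = (n : ℝ) * ‖g y‖ := by
        rw [norm_smul, Complex.norm_natCast]
      rw [h2, h3] at h1
      exact h1
    have : ‖g y‖ = 0 := by
      by_contra h
      have hpos : 0 < ‖g y‖ := lt_of_le_of_ne (norm_nonneg _) (Ne.symm h)
      obtain ⟨n, hn⟩ := exists_nat_gt ((M * M * ‖y‖ + ‖y‖) / ‖g y‖)
      have := hCle n
      rw [div_lt_iff₀ hpos] at hn
      linarith
    exact norm_eq_zero.mp this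
  have hsup : LinearMap.ker g ⊔ LinearMap.range g = ⊤ := by
    apply Submodule.eq_top_of_finrank_eq
    have h1 := Submodule.finrank_sup_add_finrank_inf_eq
      (LinearMap.ker g) (LinearMap.range g)
    have h2 := LinearMap.finrank_range_add_finrank_ker g
    rw [hdisj.eq_bot] at h1
    simp only [finrank_bot, add_zero] at h1
    omega
  obtain ⟨u, hu, w, hw, huw⟩ := Submodule.mem_sup.mp
    (hsup ▸ Submodule.mem_top :
      (1 : Matrix (Fin d) (Fin d) ℂ) ∈ LinearMap.ker g ⊔ LinearMap.range g)
  obtain ⟨v, rfl⟩ := hw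
  have hLu : ∀ k : ℕ, (L ^ k) u = u := by
    have hLu1 : L u = u := by
      have hx := LinearMap.mem_ker.mp hu
      have h0 : L u - u = 0 := by
        simpa [hg, LinearMap.sub_apply, Module.End.one_apply] using hx
      linear_combination (norm := module) h0
    intro k
    induction k with
    | zero => simp
    | succ k ih => rw [pow_succ, Module.End.mul_apply, hLu1, ih]
  have hsum : ∀ n : ℕ, (∑ j ∈ Finset.range n, (T ^ (j + 1))ᴴ * T ^ (j + 1))
      = (n : ℂ) • u + ((L ^ (n + 1)) v - (L ^ 1) v) := by
    intro n
    have hterm : ∀ j : ℕ, (T ^ (j + 1))ᴴ * T ^ (j + 1)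
        = u + ((L ^ (j + 2)) v - (L ^ (j + 1)) v) := by
      intro j
      have h1 : (T ^ (j + 1))ᴴ * T ^ (j + 1)
          = (L ^ (j + 1)) (1 : Matrix (Fin d) (Fin d) ℂ) := by
        rw [hLpow]; simp
      rw [h1, ← huw, map_add, hLu]
      congr 1
      rw [hg]
      simp only [LinearMap.sub_apply, Module.End.one_apply, map_sub,
        ← Module.End.mul_apply, ← pow_succ]
    calc (∑ j ∈ Finset.range n, (T ^ (j + 1))ᴴ * T ^ (j + 1))
        = ∑ j ∈ Finset.range n, (u + ((L ^ (j + 2)) v - (L ^ (j + 1)) v)) :=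
          Finset.sum_congr rfl fun j _ => hterm j
      _ = (n : ℂ) • u + ((L ^ (n + 1)) v - (L ^ 1) v) := by
          rw [Finset.sum_add_distrib, Finset.sum_const, Finset.card_range,
            Finset.sum_range_sub (fun j => (L ^ (j + 1)) v) n]
          congr 1
          exact (Nat.cast_smul_eq_nsmul ℂ n u).symm
  refine ⟨u, ?_⟩
  have he : Tendsto (fun n : ℕ => (n : ℂ)⁻¹ • ((L ^ (n + 1)) v - (L ^ 1) v))
      atTop (nhds 0) := by
    apply squeeze_zero_norm
      (a := fun n : ℕ => (M * M * ‖v‖ + M * M * ‖v‖) / n)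
    · intro n
      have hz : ‖(L ^ (n + 1)) v - (L ^ 1) v‖ ≤ M * M * ‖v‖ + M * M * ‖v‖ :=
        le_trans (norm_sub_le _ _)
          (add_le_add (hbound (n + 1) v) (hbound 1 v))
      rw [norm_smul, norm_inv, Complex.norm_natCast, div_eq_inv_mul]
      gcongr
    · exact tendsto_const_div_atTop_nhds_zero_nat _
  have hfin := (tendsto_const_nhds (x := u)
    (f := atTop (α := ℕ))).add he
  rw [add_zero] at hfin
  apply hfin.congr'
  filter_upwards [eventually_ge_atTop 1] with n hn
  have hn0 : (n : ℂ) ≠ 0 := Nat.cast_ne_zero.mpr (by omega)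
  rw [hsum n, smul_add, smul_smul, inv_mul_cancel₀ hn0, one_smul]
end

section
/- If T is a d×d matrix for which the Cesàro asymptotic limit A_{T,C} = lim_{n→∞} (1/n)·∑_{j=1}^n T^{*j} T^j exists, then T is power-bounded. -/
open Filter

open scoped Matrix Matrix.Norms.L2Operator

section AuxPB

open Finset
open scoped InnerProductSpace

variable {E : Type*} [NormedAddCommGroup E] [InnerProductSpace ℂ E]

private lemma auxPB_choose_bdd (k : ℕ) {r : ℝ} (h0 : 0 ≤ r) (h1 : r < 1) :
    ∃ B : ℝ, ∀ n : ℕ, (n.choose k : ℝ) * r ^ (n - k) ≤ B := by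
  have hs : Summable (fun m : ℕ => ((m + k).choose k : ℝ) * r ^ m) := by
    have := summable_choose_mul_geometric_of_norm_lt_one (R := ℝ) k
      (r := r) (by rwa [Real.norm_eq_abs, abs_of_nonneg h0])
    exact this
  obtain ⟨B, hB⟩ := hs.tendsto_atTop_zero.bddAbove_range
  refine ⟨B, fun n => ?_⟩
  rcases le_or_gt k n with h | h
  · have : ((n - k) + k).choose k * r ^ (n - k) ≤ B := hB ⟨n - k, rfl⟩
    rwa [Nat.sub_add_cancel h] at this
  · have h0' : (n.choose k : ℝ) = 0 := by simp [Nat.choose_eq_zero_of_lt h]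
    rw [h0', zero_mul]
    calc (0:ℝ) ≤ ((0 + k).choose k : ℝ) * r ^ 0 := by positivity
    _ ≤ B := hB ⟨0, rfl⟩

private lemma auxPB_pow_apply (g : E →L[ℂ] E) {μ : ℂ} {x : E} (hgx : g x = μ • x) :
    ∀ n : ℕ, (g ^ n) x = μ ^ n • x := by
  intro n
  induction n with
  | zero => simp
  | succ n ih =>
    rw [pow_succ, ContinuousLinearMap.mul_apply, hgx, map_smul, ih, smul_smul, ← pow_succ']

private lemma auxPB_eig_le_one (g : E →L[ℂ] E) (C : ℝ)
    (hkey : ∀ (x : E) (n : ℕ), ‖(g ^ (n + 1)) x‖ ^ 2 ≤ C * (n + 1) * ‖x‖ ^ 2)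
    {μ : ℂ} {x : E} (hx : x ≠ 0) (hgx : g x = μ • x) : ‖μ‖ ≤ 1 := by
  by_contra hlt
  push_neg at hlt
  set r : ℝ := ‖μ‖ ^ 2 with hrdef
  have hr : 1 < r := by
    nlinarith [norm_nonneg μ, hlt]
  have hx2 : 0 < ‖x‖ ^ 2 := pow_pos (norm_pos_iff.mpr hx) 2
  have hq : ∀ n : ℕ, r ^ (n + 1) ≤ C * (n + 1) := by
    intro n
    have h1 := hkey x n
    rw [auxPB_pow_apply g hgx] at h1
    rw [norm_smul, norm_pow] at h1
    have h2 : (‖μ‖ ^ (n+1)) ^ 2 = r ^ (n + 1) := by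
      rw [hrdef, ← pow_mul, ← pow_mul, Nat.mul_comm]
    rw [mul_pow, h2] at h1
    have := le_of_mul_le_mul_right h1 hx2
    exact this
  have hbern : ∀ q : ℕ, 1 + (q : ℝ) * (r - 1) ≤ r ^ q := by
    intro q
    have := one_add_mul_le_pow (a := r - 1) (by linarith) q
    simpa using this
  set δ : ℝ := r - 1 with hδdef
  have hδ : 0 < δ := by simp [hδdef]; linarith
  obtain ⟨n, hn⟩ := exists_nat_gt (2 * C / δ ^ 2)
  set t : ℝ := (n : ℝ) + 1 with htdef
  have ht : 0 < t := by positivity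
  have h3 : r ^ (2 * n + 2) ≤ C * (2 * t) := by
    have h3a := hq (2 * n + 1)
    have e1 : 2 * n + 1 + 1 = 2 * n + 2 := by ring
    rw [e1] at h3a
    calc r ^ (2 * n + 2) ≤ C * (↑(2 * n + 1) + 1) := h3a
    _ = C * (2 * t) := by push_cast [htdef]; ring
  have h4 : (1 + t * δ) ^ 2 ≤ r ^ (2 * n + 2) := by
    have h5 : r ^ (2 * n + 2) = (r ^ (n + 1)) ^ 2 := by ring
    rw [h5]
    have h6 := hbern (n + 1)
    have h7 : (1:ℝ) + t * δ ≤ r ^ (n+1) := by push_cast [htdef] at h6 ⊢; linarith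
    have h7' : (0:ℝ) ≤ 1 + t * δ := by nlinarith [ht, hδ]
    exact pow_le_pow_left₀ h7' h7 2
  have h8 : t ^ 2 * δ ^ 2 ≤ 2 * C * t := by nlinarith [h3, h4, ht, hδ]
  have h9 : 2 * C < t * δ ^ 2 := by
    rw [div_lt_iff₀ (by positivity)] at hn
    nlinarith [hδ, ht, hn]
  nlinarith [h8, h9, ht, mul_pos ht (sub_pos.mpr h9)]

private lemma auxPB_no_jordan (g : E →L[ℂ] E) (C : ℝ)
    (hkey : ∀ (x : E) (n : ℕ), ‖(g ^ (n + 1)) x‖ ^ 2 ≤ C * (n + 1) * ‖x‖ ^ 2)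
    {μ : ℂ} (hμ : ‖μ‖ = 1) (v w : E) (hv : g v = μ • v + w) (hw : g w = μ • w) :
    w = 0 := by
  by_contra hw0
  have hform : ∀ n : ℕ, (g ^ (n + 1)) v = μ ^ (n + 1) • v + ((n : ℂ) + 1) • μ ^ n • w := by
    intro n
    induction n with
    | zero => simpa using hv
    | succ n ih =>
      rw [pow_succ', ContinuousLinearMap.mul_apply, ih, map_add, map_smul, map_smul, map_smul,
        hv, hw]
      push_cast
      module
  have ha : 0 < ‖w‖ := norm_pos_iff.mpr hw0
  set a : ℝ := ‖w‖
  set b : ℝ := ‖v‖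
  have hb : 0 ≤ b := norm_nonneg _
  obtain ⟨n, hn⟩ := exists_nat_gt (max (2 * b / a) (4 * C * b ^ 2 / a ^ 2))
  set t : ℝ := (n : ℝ) + 1 with htdef
  have hn1 : 2 * b / a < t := lt_of_le_of_lt (le_max_left _ _) (by push_cast [htdef] at hn ⊢; linarith)
  have hn2 : 4 * C * b ^ 2 / a ^ 2 < t := lt_of_le_of_lt (le_max_right _ _) (by push_cast [htdef] at hn ⊢; linarith)
  set s : ℝ := ‖(g ^ (n + 1)) v‖ with hsdef
  have hs0 : 0 ≤ s := norm_nonneg _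
  have hs1 : t * a - b ≤ s := by
    have h1 : ((n : ℂ) + 1) • μ ^ n • w = (g ^ (n + 1)) v - μ ^ (n + 1) • v := by
      rw [hform n]; abel
    have h2 : ‖((n : ℂ) + 1) • μ ^ n • w‖ = t * a := by
      rw [norm_smul, norm_smul, norm_pow, hμ, one_pow, one_mul]
      congr 1
      rw [htdef]
      rw [show ((n : ℂ) + 1) = ((n + 1 : ℕ) : ℂ) by push_cast; ring]
      rw [Complex.norm_natCast]
      push_cast; ring
    have h3 : ‖μ ^ (n + 1) • v‖ = b := by
      rw [norm_smul, norm_pow, hμ, one_pow, one_mul]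
    calc t * a - b = ‖((n : ℂ) + 1) • μ ^ n • w‖ - ‖μ ^ (n + 1) • v‖ := by rw [h2, h3]
    _ ≤ ‖(g ^ (n + 1)) v‖ := by
        rw [h1]
        exact le_trans (sub_le_sub_right (norm_sub_le _ _) _) (by simp)
  have hs2 : s ^ 2 ≤ C * t * b ^ 2 := by
    have := hkey v n
    rw [← hsdef] at this
    calc s ^ 2 ≤ C * ((n : ℝ) + 1) * ‖v‖ ^ 2 := this
    _ = C * t * b ^ 2 := by rw [htdef]
  have hta : 2 * b < t * a := by
    rw [div_lt_iff₀ ha] at hn1; linarith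
  have hta0 : 0 ≤ t * a := by positivity
  have hs3 : t * a ≤ 2 * s := by linarith
  have h4 : (t * a) * (t * a) ≤ (2 * s) * (2 * s) := mul_le_mul hs3 hs3 hta0 (by linarith)
  have h5 : t * a ^ 2 ≤ 4 * C * b ^ 2 := by
    have ht : 0 < t := by positivity
    nlinarith [h4, hs2, ht]
  have h6 : 4 * C * b ^ 2 < t * a ^ 2 := by
    rw [div_lt_iff₀ (by positivity)] at hn2; linarith
  linarith

variable [CompleteSpace E]

private lemma auxPB_key (g : E →L[ℂ] E) (C : ℝ)
    (hS : ∀ n : ℕ,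
      ‖(n : ℂ)⁻¹ • ∑ j ∈ Finset.range n, (star (g ^ (j + 1)) * g ^ (j + 1))‖ ≤ C)
    (x : E) (n : ℕ) : ‖(g ^ (n + 1)) x‖ ^ 2 ≤ C * (n + 1) * ‖x‖ ^ 2 := by
  set m : ℕ := n + 1 with hm
  set Sm : E →L[ℂ] E := (m : ℂ)⁻¹ • ∑ j ∈ Finset.range m, (star (g ^ (j + 1)) * g ^ (j + 1))
    with hSm
  have hm0 : ((m : ℂ)) ≠ 0 := Nat.cast_ne_zero.mpr (by omega)
  have e1 : ⟪x, Sm x⟫_ℂ = (m : ℂ)⁻¹ * ∑ j ∈ Finset.range m, ((‖(g ^ (j + 1)) x‖ : ℂ)) ^ 2 := by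
    rw [hSm]
    simp only [ContinuousLinearMap.smul_apply, inner_smul_right,
      ContinuousLinearMap.sum_apply, inner_sum, ContinuousLinearMap.mul_apply,
      ContinuousLinearMap.star_eq_adjoint, ContinuousLinearMap.adjoint_inner_right,
      inner_self_eq_norm_sq_to_K]
    norm_cast
  have e2 : ((m : ℂ) * ⟪x, Sm x⟫_ℂ).re = ∑ j ∈ Finset.range m, ‖(g ^ (j + 1)) x‖ ^ 2 := by
    rw [e1, ← mul_assoc, mul_inv_cancel₀ hm0, one_mul]
    norm_cast
  have e3 : ((m : ℂ) * ⟪x, Sm x⟫_ℂ).re ≤ (m : ℝ) * (C * ‖x‖ ^ 2) := by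
    have h1 : ((m : ℂ) * ⟪x, Sm x⟫_ℂ).re = (m : ℝ) * (⟪x, Sm x⟫_ℂ).re := by
      rw [show ((m : ℂ)) = (((m : ℝ) : ℂ)) by push_cast; ring, Complex.re_ofReal_mul]
    rw [h1]
    have h2 : (⟪x, Sm x⟫_ℂ).re ≤ C * ‖x‖ ^ 2 := by
      calc (⟪x, Sm x⟫_ℂ).re ≤ ‖⟪x, Sm x⟫_ℂ‖ := Complex.re_le_norm _
      _ ≤ ‖x‖ * ‖Sm x‖ := norm_inner_le_norm _ _
      _ ≤ ‖x‖ * (C * ‖x‖) := by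
          refine mul_le_mul_of_nonneg_left ?_ (norm_nonneg _)
          calc ‖Sm x‖ ≤ ‖Sm‖ * ‖x‖ := Sm.le_opNorm x
          _ ≤ C * ‖x‖ := mul_le_mul_of_nonneg_right (hS m) (norm_nonneg _)
      _ = C * ‖x‖ ^ 2 := by ring
    nlinarith [h2, Nat.cast_nonneg (α := ℝ) m]
  have e4 : ‖(g ^ (n + 1)) x‖ ^ 2 ≤ ∑ j ∈ Finset.range m, ‖(g ^ (j + 1)) x‖ ^ 2 := by
    refine Finset.single_le_sum (f := fun j => ‖(g ^ (j + 1)) x‖ ^ 2) (fun j _ => by positivity) ?_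
    simp [hm]
  calc ‖(g ^ (n + 1)) x‖ ^ 2 ≤ ∑ j ∈ Finset.range m, ‖(g ^ (j + 1)) x‖ ^ 2 := e4
  _ = ((m : ℂ) * ⟪x, Sm x⟫_ℂ).re := e2.symm
  _ ≤ (m : ℝ) * (C * ‖x‖ ^ 2) := e3
  _ = C * (n + 1) * ‖x‖ ^ 2 := by rw [hm]; push_cast; ring

private lemma auxPB_bounded_on_gen (g : E →L[ℂ] E)
    (hle : ∀ (μ : ℂ) (x : E), x ≠ 0 → g x = μ • x → ‖μ‖ ≤ 1)
    (hsemi : ∀ (μ : ℂ), ‖μ‖ = 1 → ∀ v w : E, g v = μ • v + w → g w = μ • w → w = 0)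
    (μ : ℂ) (v : E)
    (hv : v ∈ Module.End.maxGenEigenspace (↑g : Module.End ℂ E) μ) :
    ∃ M : ℝ, ∀ n : ℕ, ‖(g ^ n) v‖ ≤ M := by
  classical
  set f : Module.End ℂ E := (↑g : E →ₗ[ℂ] E) with hf
  have hpow : ∀ (n : ℕ) (x : E), (f ^ n) x = (g ^ n) x := by
    intro n
    induction n with
    | zero => intro x; simp
    | succ n ih =>
      intro x
      rw [pow_succ, pow_succ, Module.End.mul_apply, ContinuousLinearMap.mul_apply, ih]
      rfl
  set N : Module.End ℂ E := f - μ • 1 with hN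
  have hNapp : ∀ u : E, N u = g u - μ • u := by
    intro u; simp [hN, hf]
  rw [Module.End.mem_maxGenEigenspace] at hv
  rcases eq_or_ne v 0 with rfl | hv0
  · exact ⟨0, fun n => by simp⟩
  have hk0ex : ∃ k : ℕ, (N ^ k) v = 0 := hv
  set k₀ : ℕ := Nat.find hk0ex with hk₀
  have hk₀spec : (N ^ k₀) v = 0 := Nat.find_spec hk0ex
  have hk₀ne : k₀ ≠ 0 := by
    intro h
    rw [h, pow_zero] at hk₀spec
    exact hv0 hk₀spec
  set x : E := (N ^ (k₀ - 1)) v with hxdef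
  have hxne : x ≠ 0 := by
    have := Nat.find_min hk0ex (m := k₀ - 1) (by omega)
    simpa [hxdef] using this
  have hNx : N x = 0 := by
    have : N ((N ^ (k₀ - 1)) v) = (N ^ k₀) v := by
      rw [← Module.End.mul_apply, ← pow_succ']
      congr 2
      omega
    rw [hxdef, this, hk₀spec]
  have hgx : g x = μ • x := by
    have := hNapp x
    rw [hNx] at this
    have h2 : g x - μ • x = 0 := this.symm
    linear_combination (norm := module) h2
  have hμle : ‖μ‖ ≤ 1 := hle μ x hxne hgx
  rcases eq_or_lt_of_le hμle with hμ1 | hμlt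
  · have hker : ∀ u : E, N (N u) = 0 → N u = 0 := by
      intro u h2
      refine hsemi μ hμ1 u (N u) ?_ ?_
      · rw [hNapp u]; module
      · have := hNapp (N u)
        rw [h2] at this
        have h3 : g (N u) - μ • N u = 0 := this.symm
        linear_combination (norm := module) h3
    have hind : ∀ (k : ℕ) (u : E), (N ^ k) u = 0 → N u = 0 := by
      intro k
      induction k with
      | zero => intro u h; rw [pow_zero, Module.End.one_apply] at h; simp [h]
      | succ k ih =>
        intro u h
        have h4 : (N ^ k) (N u) = 0 := by
          rw [← Module.End.mul_apply, ← pow_succ]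
          exact h
        exact hker u (ih (N u) h4)
    have hNv : N v = 0 := hind k₀ v hk₀spec
    have hgv : g v = μ • v := by
      have := hNapp v
      rw [hNv] at this
      have h2 : g v - μ • v = 0 := this.symm
      linear_combination (norm := module) h2
    refine ⟨‖v‖, fun n => ?_⟩
    rw [auxPB_pow_apply g hgv n, norm_smul, norm_pow, hμ1, one_pow, one_mul]
  · have hBex : ∀ k : ℕ, ∃ B : ℝ, ∀ n : ℕ, (n.choose k : ℝ) * ‖μ‖ ^ (n - k) ≤ B :=
      fun k => auxPB_choose_bdd k (norm_nonneg μ) hμlt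
    choose B hB using hBex
    have hB0 : ∀ k, 0 ≤ B k := by
      intro k
      refine le_trans ?_ (hB k k)
      simp [Nat.choose_self]
    refine ⟨∑ k ∈ Finset.range k₀, B k * ‖(N ^ k) v‖, fun n => ?_⟩
    have hcomm : Commute N (μ • (1 : Module.End ℂ E)) :=
      (Commute.one_right N).smul_right μ
    have hfN : f = N + μ • 1 := by rw [hN]; abel
    have hexp : (g ^ n) v = ∑ k ∈ Finset.range (n + 1),
        (N ^ k * (μ • (1 : Module.End ℂ E)) ^ (n - k) * (n.choose k : Module.End ℂ E)) v := by
      rw [← hpow n v, hfN, hcomm.add_pow n, LinearMap.sum_apply]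
    have hterm : ∀ k : ℕ,
        (N ^ k * (μ • (1 : Module.End ℂ E)) ^ (n - k) * (n.choose k : Module.End ℂ E)) v
          = (n.choose k : ℂ) • μ ^ (n - k) • (N ^ k) v := by
      intro k
      rw [Module.End.mul_apply, Module.End.mul_apply, Module.End.natCast_apply]
      rw [smul_pow, one_pow]
      rw [LinearMap.smul_apply, Module.End.one_apply]
      rw [← Nat.cast_smul_eq_nsmul ℂ (n.choose k) v]
      rw [map_smul, map_smul]
      exact smul_comm _ _ _
    have hnorm : ‖(g ^ n) v‖ ≤ ∑ k ∈ Finset.range (n + 1),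
        (n.choose k : ℝ) * ‖μ‖ ^ (n - k) * ‖(N ^ k) v‖ := by
      rw [hexp]
      refine le_trans (norm_sum_le _ _) (Finset.sum_le_sum fun k _ => ?_)
      rw [hterm k]
      refine le_of_eq ?_
      rw [norm_smul, norm_smul, norm_pow, Complex.norm_natCast]
      ring
    have hvanish : ∀ k : ℕ, k₀ ≤ k → (N ^ k) v = 0 := by
      intro k hk
      have : N ^ k = N ^ (k - k₀) * N ^ k₀ := by
        rw [← pow_add]
        congr 1
        omega
      rw [this, Module.End.mul_apply, hk₀spec, map_zero]
    set u : ℕ → ℝ := fun k => if k < k₀ then B k * ‖(N ^ k) v‖ else 0 with hu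
    have hstep : ∀ k ∈ Finset.range (n + 1),
        (n.choose k : ℝ) * ‖μ‖ ^ (n - k) * ‖(N ^ k) v‖ ≤ u k := by
      intro k _
      simp only [hu]
      by_cases hk : k < k₀
      · rw [if_pos hk]
        exact mul_le_mul_of_nonneg_right (hB k n) (norm_nonneg _)
      · rw [if_neg hk]
        rw [hvanish k (by omega), norm_zero, mul_zero]
    have hsum2 : ∑ k ∈ Finset.range (n + 1), u k ≤ ∑ k ∈ Finset.range k₀, u k := by
      rw [show ∑ k ∈ Finset.range (n + 1), u k
          = ∑ k ∈ Finset.range (n + 1) ∩ Finset.range k₀, u k from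
        (Finset.sum_subset Finset.inter_subset_left (fun k hkmem hk => by
          simp only [hu]
          exact if_neg (fun h => hk
            (Finset.mem_inter.mpr ⟨hkmem, Finset.mem_range.mpr h⟩)))).symm]
      refine Finset.sum_le_sum_of_subset_of_nonneg Finset.inter_subset_right ?_
      intro k _ _
      simp only [hu]
      by_cases hk : k < k₀
      · rw [if_pos hk]; exact mul_nonneg (hB0 k) (norm_nonneg _)
      · rw [if_neg hk]
    have hsum3 : ∑ k ∈ Finset.range k₀, u k = ∑ k ∈ Finset.range k₀, B k * ‖(N ^ k) v‖ := by
      refine Finset.sum_congr rfl fun k hk => ?_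
      simp only [hu]
      rw [if_pos (Finset.mem_range.mp hk)]
    calc ‖(g ^ n) v‖ ≤ ∑ k ∈ Finset.range (n + 1),
        (n.choose k : ℝ) * ‖μ‖ ^ (n - k) * ‖(N ^ k) v‖ := hnorm
    _ ≤ ∑ k ∈ Finset.range (n + 1), u k := Finset.sum_le_sum hstep
    _ ≤ ∑ k ∈ Finset.range k₀, u k := hsum2
    _ = ∑ k ∈ Finset.range k₀, B k * ‖(N ^ k) v‖ := hsum3

private lemma auxPB_uniform [FiniteDimensional ℂ E] (g : E →L[ℂ] E) (C : ℝ)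
    (hS : ∀ n : ℕ,
      ‖(n : ℂ)⁻¹ • ∑ j ∈ Finset.range n, (star (g ^ (j + 1)) * g ^ (j + 1))‖ ≤ C) :
    ∃ M : ℝ, ∀ n : ℕ, ‖(g ^ n : E →L[ℂ] E)‖ ≤ M := by
  have hkey := auxPB_key g C hS
  have hle : ∀ (μ : ℂ) (x : E), x ≠ 0 → g x = μ • x → ‖μ‖ ≤ 1 :=
    fun μ x hx hgx => auxPB_eig_le_one g C hkey hx hgx
  have hsemi : ∀ (μ : ℂ), ‖μ‖ = 1 → ∀ v w : E, g v = μ • v + w → g w = μ • w → w = 0 :=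
    fun μ hμ v w hv hw => auxPB_no_jordan g C hkey hμ v w hv hw
  have hpt : ∀ v : E, ∃ M : ℝ, ∀ n : ℕ, ‖(g ^ n) v‖ ≤ M := by
    intro v
    have htop := Module.End.iSup_maxGenEigenspace_eq_top (↑g : Module.End ℂ E)
    have hv : v ∈ ⨆ μ : ℂ, Module.End.maxGenEigenspace (↑g : Module.End ℂ E) μ := by
      rw [htop]; trivial
    refine Submodule.iSup_induction _ (motive := fun v => ∃ M : ℝ, ∀ n : ℕ, ‖(g ^ n) v‖ ≤ M) hv
      ?_ ?_ ?_
    · intro μ x hx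
      exact auxPB_bounded_on_gen g hle hsemi μ x hx
    · exact ⟨0, fun n => by simp⟩
    · rintro x y ⟨M₁, hM₁⟩ ⟨M₂, hM₂⟩
      refine ⟨M₁ + M₂, fun n => ?_⟩
      rw [map_add]
      exact le_trans (norm_add_le _ _) (add_le_add (hM₁ n) (hM₂ n))
  exact banach_steinhaus hpt

end AuxPB

/-- If the Cesàro asymptotic limit `lim_{n→∞} (1/n) ∑_{j=1}^n T^{*j} T^j` of a `d × d`
complex matrix `T` exists, then `T` is power-bounded. -/
theorem powerbounded_of_cesaro_asymptotic_limit (d : ℕ) (T : Matrix (Fin d) (Fin d) ℂ)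
    (hC : ∃ A : Matrix (Fin d) (Fin d) ℂ,
      Tendsto (fun n : ℕ =>
          ((n : ℂ)⁻¹ • ∑ j ∈ Finset.range n, (T ^ (j + 1))ᴴ * T ^ (j + 1)))
        atTop (nhds A)) :
    ∃ M > 0, ∀ n : ℕ, ‖T ^ n‖ < M := by
  obtain ⟨A, hA⟩ := hC
  obtain ⟨C, hCmem⟩ := hA.norm.bddAbove_range
  have hCb : ∀ n : ℕ,
      ‖(n : ℂ)⁻¹ • ∑ j ∈ Finset.range n, (T ^ (j + 1))ᴴ * T ^ (j + 1)‖ ≤ C :=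
    fun n => hCmem ⟨n, rfl⟩
  set g : EuclideanSpace ℂ (Fin d) →L[ℂ] EuclideanSpace ℂ (Fin d) :=
    Matrix.toEuclideanCLM (𝕜 := ℂ) (n := Fin d) T with hg
  have hmap : ∀ n : ℕ,
      Matrix.toEuclideanCLM (𝕜 := ℂ) (n := Fin d)
          ((n : ℂ)⁻¹ • ∑ j ∈ Finset.range n, (T ^ (j + 1))ᴴ * T ^ (j + 1))
        = (n : ℂ)⁻¹ • ∑ j ∈ Finset.range n, (star (g ^ (j + 1)) * g ^ (j + 1)) := by
    intro n
    rw [map_smul, map_sum]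
    congr 1
    refine Finset.sum_congr rfl fun j _ => ?_
    rw [map_mul, map_pow, ← Matrix.star_eq_conjTranspose, map_star, map_pow]
  have hS : ∀ n : ℕ,
      ‖(n : ℂ)⁻¹ • ∑ j ∈ Finset.range n, (star (g ^ (j + 1)) * g ^ (j + 1))‖ ≤ C := by
    intro n
    rw [← hmap n]
    exact hCb n
  obtain ⟨M, hM⟩ := auxPB_uniform g C hS
  have hM0 : 0 ≤ M := le_trans (norm_nonneg _) (hM 0)
  refine ⟨M + 1, by linarith, fun n => ?_⟩
  have h1 : ‖T ^ n‖ = ‖(g ^ n : EuclideanSpace ℂ (Fin d) →L[ℂ] EuclideanSpace ℂ (Fin d))‖ := by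
    rw [hg, ← map_pow]
    rfl
  rw [h1]
  exact lt_of_le_of_lt (hM n) (by linarith)
end

section
/- For a power-bounded d×d matrix T and any Banach limit L, the L-asymptotic limit A_{T,L} (the entry-wise L-limit of the sequence T^{*n}T^n) equals the Cesàro asymptotic limit A_{T,C} = lim_{n→∞} (1/n)·∑_{j=1}^n T^{*j}T^j. -/
set_option maxHeartbeats 1000000

open Filter BoundedContinuousFunction

open scoped Matrix Matrix.Norms.L2Operator

/-- `L` is a Banach limit: a norm-one continuous linear functional on bounded complex
sequences which extends ordinary limits, is positive on nonnegative real sequences,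
and is shift-invariant. -/
structure IsBanachLimit (L : (ℕ →ᵇ ℂ) →L[ℂ] ℂ) : Prop where
  norm_eq_one : ‖L‖ = 1
  tendsto_imp : ∀ (x : ℕ →ᵇ ℂ) (c : ℂ), Tendsto (⇑x) atTop (nhds c) → L x = c
  positive : ∀ x : ℕ →ᵇ ℂ, (∀ n, ∃ r : ℝ, 0 ≤ r ∧ x n = r) → ∃ s : ℝ, 0 ≤ s ∧ L x = s
  shift_invariant : ∀ x : ℕ →ᵇ ℂ,
    L (x.compContinuous ⟨fun n => n + 1, continuous_of_discreteTopology⟩) = L x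

lemma euc_apply_le_aux (d : ℕ) (y : EuclideanSpace ℂ (Fin d)) (i : Fin d) : ‖y i‖ ≤ ‖y‖ := by
  have h : ‖y i‖^2 ≤ ∑ k, ‖y k‖^2 :=
    Finset.single_le_sum (f := fun k => ‖y k‖^2) (fun k _ => sq_nonneg _) (Finset.mem_univ i)
  rw [EuclideanSpace.norm_eq]
  rw [show ‖y i‖ = Real.sqrt (‖y i‖^2) by rw [Real.sqrt_sq (norm_nonneg _)]]
  exact Real.sqrt_le_sqrt h

lemma matrix_entry_le_aux (d : ℕ) (X : Matrix (Fin d) (Fin d) ℂ) (i j : Fin d) :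
    ‖X i j‖ ≤ ‖X‖ := by
  have h := X.l2_opNorm_mulVec (EuclideanSpace.single j (1:ℂ))
  rw [EuclideanSpace.norm_single, norm_one, mul_one] at h
  refine le_trans (le_trans ?_ (euc_apply_le_aux d
    ((EuclideanSpace.equiv (Fin d) ℂ).symm (X *ᵥ (EuclideanSpace.single j (1:ℂ)))) i)) h
  apply le_of_eq
  congr 1
  show X i j = (X *ᵥ (EuclideanSpace.single j (1:ℂ) : Fin d → ℂ)) i
  have : (EuclideanSpace.single j (1:ℂ) : Fin d → ℂ) = Pi.single j 1 := rfl
  rw [this, Matrix.mulVec_single]; simp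

lemma conj_norm_le_aux (d : ℕ) (M : ℝ) (hM : 0 < M) (S X : Matrix (Fin d) (Fin d) ℂ)
    (hS : ‖S‖ ≤ M) : ‖Sᴴ * X * S‖ ≤ M^2 * ‖X‖ := by
  calc ‖Sᴴ * X * S‖ ≤ ‖Sᴴ * X‖ * ‖S‖ := Matrix.l2_opNorm_mul _ _
    _ ≤ (‖Sᴴ‖ * ‖X‖) * ‖S‖ := by
        apply mul_le_mul_of_nonneg_right (Matrix.l2_opNorm_mul _ _) (norm_nonneg _)
    _ = (‖S‖ * ‖X‖) * ‖S‖ := by rw [Matrix.l2_opNorm_conjTranspose]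
    _ ≤ (M * ‖X‖) * M := by
        apply mul_le_mul (mul_le_mul_of_nonneg_right hS (norm_nonneg _)) hS (norm_nonneg _)
        positivity
    _ = M^2 * ‖X‖ := by ring

/-- For a power-bounded `d × d` matrix `T` and any Banach limit `L`, the `L`-asymptotic
limit (the entry-wise `L`-limit of the sequence `T^{*n} T^n`, `n ≥ 1`) equals the Cesàro
asymptotic limit `A = lim_{n→∞} (1/n) ∑_{j=1}^n T^{*j} T^j`. -/
theorem banach_limit_eq_cesaro_asymptotic_limit (d : ℕ) (T : Matrix (Fin d) (Fin d) ℂ)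
    (hpb : ∃ M > 0, ∀ n : ℕ, ‖T ^ n‖ < M)
    (L : (ℕ →ᵇ ℂ) →L[ℂ] ℂ) (hL : IsBanachLimit L)
    (A : Matrix (Fin d) (Fin d) ℂ)
    (hA : Tendsto (fun n : ℕ =>
          ((n : ℂ)⁻¹ • ∑ j ∈ Finset.range n, (T ^ (j + 1))ᴴ * T ^ (j + 1)))
        atTop (nhds A)) :
    ∀ (i j : Fin d) (f : ℕ →ᵇ ℂ),
      (∀ n : ℕ, f n = ((T ^ (n + 1))ᴴ * T ^ (n + 1)) i j) → L f = A i j := by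
  obtain ⟨M, hM, hTn⟩ := hpb
  set Q : ℕ → Matrix (Fin d) (Fin d) ℂ := fun n => (T ^ (n + 1))ᴴ * T ^ (n + 1) with hQ
  set avg : ℕ → Matrix (Fin d) (Fin d) ℂ :=
    fun N => (N : ℂ)⁻¹ • ∑ k ∈ Finset.range N, Q k with havg
  -- shift law for Q
  have hshift : ∀ n k : ℕ, Q (n + k) = (T ^ n)ᴴ * Q k * T ^ n := by
    intro n k
    have h1 : T ^ (n + k + 1) = T ^ (k + 1) * T ^ n := by
      rw [← pow_add]; ring_nf
    simp only [hQ, h1, Matrix.conjTranspose_mul]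
    noncomm_ring
  -- bound on Q
  have hQb : ∀ n, ‖Q n‖ ≤ M ^ 2 := by
    intro n
    have := Matrix.l2_opNorm_conjTranspose_mul_self (T ^ (n + 1))
    rw [hQ]
    simp only [this]
    calc ‖T ^ (n+1)‖ * ‖T ^ (n+1)‖ ≤ M * M := by
          apply mul_le_mul (hTn _).le (hTn _).le (norm_nonneg _) hM.le
      _ = M ^ 2 := by ring
  -- A is a fixed point of X ↦ Tᴴ X T
  have hfix : Tᴴ * A * T = A := by
    have h1 : Tendsto (fun N => Tᴴ * avg N * T) atTop (nhds (Tᴴ * A * T)) :=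
      (tendsto_const_nhds.mul hA).mul tendsto_const_nhds
    have hid : ∀ N : ℕ, Tᴴ * avg N * T = avg N + (N : ℂ)⁻¹ • (Q N - Q 0) := by
      intro N
      have hs : ∑ k ∈ Finset.range N, Q (k + 1)
          = ∑ k ∈ Finset.range N, Q k + Q N - Q 0 := by
        have h := (Finset.sum_range_succ' Q N).symm.trans (Finset.sum_range_succ Q N)
        exact eq_sub_of_add_eq h
      have hTQ : ∀ k, Tᴴ * Q k * T = Q (1 + k) := by
        intro k; rw [hshift 1 k, pow_one]
      calc Tᴴ * avg N * T = (N : ℂ)⁻¹ • (Tᴴ * (∑ k ∈ Finset.range N, Q k) * T) := by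
            rw [havg]
            simp [Matrix.mul_smul, Matrix.smul_mul]
        _ = (N : ℂ)⁻¹ • (∑ k ∈ Finset.range N, Tᴴ * Q k * T) := by
            rw [Finset.mul_sum, Finset.sum_mul]
        _ = (N : ℂ)⁻¹ • (∑ k ∈ Finset.range N, Q (k + 1)) := by
            congr 1; apply Finset.sum_congr rfl; intro k _
            rw [hTQ k, Nat.add_comm]
        _ = (N : ℂ)⁻¹ • (∑ k ∈ Finset.range N, Q k + Q N - Q 0) := by rw [hs]
        _ = avg N + (N : ℂ)⁻¹ • (Q N - Q 0) := by
            rw [havg]; rw [← smul_add]; congr 1; abel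
    have h0 : Tendsto (fun N : ℕ => (N : ℂ)⁻¹ • (Q N - Q 0)) atTop
        (nhds (0 : Matrix (Fin d) (Fin d) ℂ)) := by
      refine squeeze_zero_norm (a := fun N : ℕ => (1 / (N:ℝ)) * (2 * M ^ 2)) (fun N => ?_) ?_
      · rw [norm_smul]
        have h1 : ‖((N:ℂ))⁻¹‖ = 1 / (N:ℝ) := by
          simp
        rw [h1]
        apply mul_le_mul_of_nonneg_left _ (by positivity)
        calc ‖Q N - Q 0‖ ≤ ‖Q N‖ + ‖Q 0‖ := norm_sub_le _ _
          _ ≤ M ^ 2 + M ^ 2 := add_le_add (hQb N) (hQb 0)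
          _ = 2 * M ^ 2 := by ring
      · have := tendsto_one_div_atTop_nhds_zero_nat.mul_const (2 * M ^ 2)
        simpa using this
    have h2 : Tendsto (fun N => Tᴴ * avg N * T) atTop (nhds A) := by
      have := hA.add h0
      rw [add_zero] at this
      exact this.congr fun N => (hid N).symm
    exact tendsto_nhds_unique h1 h2
  have hfixn : ∀ n : ℕ, (T ^ n)ᴴ * A * T ^ n = A := by
    intro n
    induction n with
    | zero => simp
    | succ n ih =>
      have : T ^ (n + 1) = T ^ n * T := pow_succ T n
      rw [this, Matrix.conjTranspose_mul]
      calc Tᴴ * (T ^ n)ᴴ * A * (T ^ n * T)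
          = Tᴴ * ((T ^ n)ᴴ * A * T ^ n) * T := by noncomm_ring
        _ = Tᴴ * A * T := by rw [ih]
        _ = A := hfix
  -- uniform Cesàro bound
  have hunif : ∀ N n : ℕ,
      ‖((N : ℂ)⁻¹ • ∑ k ∈ Finset.range N, Q (n + k)) - A‖ ≤ M ^ 2 * ‖avg N - A‖ := by
    intro N n
    have hid : ((N : ℂ)⁻¹ • ∑ k ∈ Finset.range N, Q (n + k)) - A
        = (T ^ n)ᴴ * (avg N - A) * T ^ n := by
      have h1 : (T ^ n)ᴴ * avg N * T ^ n
          = (N : ℂ)⁻¹ • ∑ k ∈ Finset.range N, Q (n + k) := by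
        rw [havg]
        simp only [Matrix.mul_smul, Matrix.smul_mul]
        congr 1
        rw [Finset.mul_sum, Finset.sum_mul]
        apply Finset.sum_congr rfl; intro k _
        rw [hshift n k]
      rw [Matrix.mul_sub, Matrix.sub_mul, h1, hfixn n]
    rw [hid]
    exact conj_norm_le_aux d M hM (T ^ n) _ (hTn n).le
  -- now the Banach limit part
  intro i j f hf
  set g : ℕ → (ℕ →ᵇ ℂ) :=
    fun k => f.compContinuous ⟨fun n => n + k, continuous_of_discreteTopology⟩ with hg
  have hgval : ∀ k n, g k n = f (n + k) := fun k n => rfl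
  have hLg : ∀ k, L (g k) = L f := by
    intro k
    induction k with
    | zero =>
      have h0 : g 0 = f := by
        ext n
        exact congrArg f (Nat.add_zero n)
      rw [h0]
    | succ k ih =>
      have h := hL.shift_invariant (g k)
      have he : (g k).compContinuous ⟨fun n => n + 1, continuous_of_discreteTopology⟩
          = g (k + 1) := by
        ext n
        show g k (n + 1) = f (n + (k + 1))
        rw [hgval]
        congr 1
        omega
      rw [he] at h
      rw [h, ih]
  have hconst : L (BoundedContinuousFunction.const ℕ (A i j)) = A i j :=
    hL.tendsto_imp _ _ (by simpa using (tendsto_const_nhds :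
      Tendsto (fun _ : ℕ => A i j) atTop (nhds (A i j))))
  have key : ∀ N : ℕ, 1 ≤ N → ‖L f - A i j‖ ≤ M ^ 2 * ‖avg N - A‖ := by
    intro N hN
    set G : ℕ →ᵇ ℂ := (N : ℂ)⁻¹ • ∑ k ∈ Finset.range N, g k with hG
    have hLG : L G = L f := by
      rw [hG, map_smul, map_sum]
      have : ∑ k ∈ Finset.range N, L (g k) = (N : ℂ) * L f := by
        rw [Finset.sum_congr rfl fun k _ => hLg k]
        simp [Finset.sum_const, mul_comm]
      rw [this, smul_eq_mul, ← mul_assoc, inv_mul_cancel₀, one_mul]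
      exact Nat.cast_ne_zero.mpr (by omega)
    have hGval : ∀ n, G n = ((N : ℂ)⁻¹ • ∑ k ∈ Finset.range N, Q (n + k)) i j := by
      intro n
      rw [hG]
      simp only [BoundedContinuousFunction.coe_smul, Pi.smul_apply, smul_eq_mul,
        Matrix.smul_apply, Matrix.sum_apply]
      congr 1
      · rw [show ((∑ k ∈ Finset.range N, g k : ℕ →ᵇ ℂ)) n
            = ∑ k ∈ Finset.range N, g k n by
          induction N with
          | zero => simp
          | succ m ihm => simp [Finset.sum_range_succ, ihm]]
        apply Finset.sum_congr rfl; intro k _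
        rw [hgval, hf]
    have hsub : L f - A i j = L (G - BoundedContinuousFunction.const ℕ (A i j)) := by
      rw [map_sub, hLG, hconst]
    rw [hsub]
    calc ‖L (G - BoundedContinuousFunction.const ℕ (A i j))‖
        ≤ ‖L‖ * ‖G - BoundedContinuousFunction.const ℕ (A i j)‖ := L.le_opNorm _
      _ = ‖G - BoundedContinuousFunction.const ℕ (A i j)‖ := by
          rw [hL.norm_eq_one, one_mul]
      _ ≤ M ^ 2 * ‖avg N - A‖ := by
          apply (BoundedContinuousFunction.norm_le (by positivity)).mpr
          intro n
          have : (G - BoundedContinuousFunction.const ℕ (A i j)) n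
              = (((N : ℂ)⁻¹ • ∑ k ∈ Finset.range N, Q (n + k)) - A) i j := by
            simp only [BoundedContinuousFunction.coe_sub, Pi.sub_apply,
              BoundedContinuousFunction.const_apply, hGval n, Matrix.sub_apply]
          rw [this]
          exact le_trans (matrix_entry_le_aux d _ i j) (hunif N n)
  have hlim : Tendsto (fun N : ℕ => M ^ 2 * ‖avg N - A‖) atTop (nhds 0) := by
    have h1 : Tendsto (fun N : ℕ => ‖avg N - A‖) atTop (nhds 0) := by
      have := (hA.sub (tendsto_const_nhds : Tendsto (fun _ : ℕ => A) atTop (nhds A))).norm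
      simpa using this
    have := h1.const_mul (M ^ 2)
    simpa using this
  have hle : ‖L f - A i j‖ ≤ 0 :=
    ge_of_tendsto hlim (eventually_atTop.2 ⟨1, key⟩)
  have : L f - A i j = 0 := norm_le_zero_iff.mp hle
  exact sub_eq_zero.mp this
end

section
/- Let T = S U S^{-1} where U = diag(λ_1,…,λ_d) is unitary with pairwise distinct λ_j and S ∈ GL_d(ℂ) has unit column vectors. Then the Cesàro asymptotic limit of T equals (S S^*)^{-1}, i.e., lim_{n→∞} (1/n)·∑_{j=1}^n T^{*j}T^j = S^{*-1} S^{-1}. -/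
open Filter

open scoped Matrix

private lemma conj_mul_norm (z : ℂ) : (starRingEnd ℂ) z * z = ((‖z‖ ^ 2 : ℝ) : ℂ) := by
  rw [← Complex.normSq_eq_conj_mul_self, Complex.normSq_eq_norm_sq]

private lemma cesaro_pow_zero (μ : ℂ) (hμ : ‖μ‖ = 1) (hne : μ ≠ 1) :
    Tendsto (fun n : ℕ => (n : ℂ)⁻¹ * ∑ j ∈ Finset.range n, μ ^ (j + 1)) atTop (nhds 0) := by
  have hd : ‖μ - 1‖ ≠ 0 := by
    simpa [sub_eq_zero] using hne
  apply squeeze_zero_norm (a := fun n : ℕ => (2 / ‖μ - 1‖) / n)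
  · intro n
    have hsum : ∑ j ∈ Finset.range n, μ ^ (j + 1) = μ * ((μ ^ n - 1) / (μ - 1)) := by
      rw [← geom_sum_eq hne n, Finset.mul_sum]
      exact Finset.sum_congr rfl fun j _ => pow_succ' μ j
    rw [hsum, norm_mul, norm_mul, hμ, one_mul, norm_div]
    have h1 : ‖μ ^ n - 1‖ ≤ 2 := by
      calc ‖μ ^ n - 1‖ ≤ ‖μ ^ n‖ + ‖(1 : ℂ)‖ := norm_sub_le _ _
        _ = 2 := by rw [norm_pow, hμ, one_pow, norm_one]; norm_num
    have h2 : ‖(n : ℂ)⁻¹‖ = (n : ℝ)⁻¹ := by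
      rw [norm_inv, Complex.norm_natCast]
    have hpos : 0 < ‖μ - 1‖ := lt_of_le_of_ne (norm_nonneg _) (Ne.symm hd)
    have h3 : (2 / ‖μ - 1‖) / (n : ℝ) = (n : ℝ)⁻¹ * (2 / ‖μ - 1‖) := by
      rw [div_eq_mul_inv, mul_comm]
    rw [h2, h3]
    gcongr
  · exact tendsto_const_div_atTop_nhds_zero_nat _

/-- If `T = S U S⁻¹` where `U = diag(λ_1, …, λ_d)` is a diagonal unitary with pairwise
distinct unimodular diagonal entries and `S` is invertible with unit column vectors, then
the Cesàro asymptotic limit of `T` equals `(S S^*)⁻¹ = S^{*-1} S⁻¹`. -/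
theorem cesaro_asymptotic_limit_of_C11 (d : ℕ) (S : Matrix (Fin d) (Fin d) ℂ)
    (hS : IsUnit S) (hcols : ∀ j : Fin d, ∑ i : Fin d, ‖S i j‖ ^ 2 = 1)
    (lam : Fin d → ℂ) (hlam : ∀ i, ‖lam i‖ = 1) (hdist : Function.Injective lam)
    (T : Matrix (Fin d) (Fin d) ℂ) (hT : T = S * Matrix.diagonal lam * S⁻¹) :
    Tendsto (fun n : ℕ =>
        ((n : ℂ)⁻¹ • ∑ j ∈ Finset.range n, (T ^ (j + 1))ᴴ * T ^ (j + 1)))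
      atTop (nhds ((S * Sᴴ)⁻¹)) := by
  have hdet : IsUnit S.det := (Matrix.isUnit_iff_isUnit_det S).mp hS
  have hinvl : S⁻¹ * S = 1 := Matrix.nonsing_inv_mul S hdet
  have hinvr : S * S⁻¹ = 1 := Matrix.mul_nonsing_inv S hdet
  -- powers of T
  have hpow : ∀ m : ℕ, T ^ m = S * Matrix.diagonal (fun i => lam i ^ m) * S⁻¹ := by
    intro m
    induction m with
    | zero => simp [hinvr]
    | succ m ih =>
      rw [pow_succ, ih, hT]
      simp only [Matrix.mul_assoc]
      rw [← Matrix.mul_assoc S⁻¹ S, hinvl, Matrix.one_mul,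
        ← Matrix.mul_assoc (Matrix.diagonal fun i => lam i ^ m) (Matrix.diagonal lam),
        Matrix.diagonal_mul_diagonal]
      have heq : (fun i => lam i ^ m * lam i) = fun i => lam i ^ (m + 1) :=
        funext fun i => (pow_succ _ _).symm
      rw [heq]
  set A : Matrix (Fin d) (Fin d) ℂ := Sᴴ * S with hA
  set G : ℕ → Matrix (Fin d) (Fin d) ℂ := fun m =>
    Matrix.diagonal (fun i => (starRingEnd ℂ) (lam i) ^ m) * A *
      Matrix.diagonal (fun i => lam i ^ m) with hG
  set F : ℕ → Matrix (Fin d) (Fin d) ℂ := fun n =>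
    (n : ℂ)⁻¹ • ∑ j ∈ Finset.range n, G (j + 1) with hF
  -- rewrite the function
  have hfun : ∀ n : ℕ,
      ((n : ℂ)⁻¹ • ∑ j ∈ Finset.range n, (T ^ (j + 1))ᴴ * T ^ (j + 1))
        = (S⁻¹)ᴴ * F n * S⁻¹ := by
    intro n
    have hterm : ∀ j : ℕ, (T ^ (j + 1))ᴴ * T ^ (j + 1) = (S⁻¹)ᴴ * G (j + 1) * S⁻¹ := by
      intro j
      rw [hpow (j + 1)]
      have hdiagH : (Matrix.diagonal (fun i => lam i ^ (j + 1)))ᴴ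
          = Matrix.diagonal (fun i => (starRingEnd ℂ) (lam i) ^ (j + 1)) := by
        have hst : (star fun i => lam i ^ (j + 1))
            = fun i => (starRingEnd ℂ) (lam i) ^ (j + 1) := by
          funext i
          rw [Pi.star_apply, star_pow]
          rfl
        rw [Matrix.diagonal_conjTranspose, hst]
      simp only [Matrix.conjTranspose_mul, hdiagH, hG, hA]
      noncomm_ring
    simp only [hterm, hF]
    rw [Matrix.mul_smul, Matrix.smul_mul]
    congr 1
    rw [Matrix.mul_sum, Matrix.sum_mul]
  simp only [hfun]
  -- F tends to 1
  have hFlim : Tendsto F atTop (nhds 1) := by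
    apply tendsto_pi_nhds.mpr
    intro i
    rw [tendsto_pi_nhds]
    intro k
    have hentry : ∀ n : ℕ, F n i k
        = A i k * ((n : ℂ)⁻¹ * ∑ j ∈ Finset.range n, ((starRingEnd ℂ) (lam i) * lam k) ^ (j + 1)) := by
      intro n
      simp only [hF, hG, Matrix.smul_apply, Matrix.sum_apply, Matrix.mul_diagonal,
        Matrix.diagonal_mul, smul_eq_mul, Finset.mul_sum, mul_pow]
      exact Finset.sum_congr rfl fun j _ => by ring
    simp only [hentry]
    by_cases hik : i = k
    · subst hik
      have hμ : (starRingEnd ℂ) (lam i) * lam i = 1 := by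
        rw [conj_mul_norm, hlam i]; norm_num
      have hAii : A i i = 1 := by
        simp only [hA, Matrix.conjTranspose_apply, Matrix.mul_apply]
        calc ∑ m, (starRingEnd ℂ) (S m i) * S m i
            = ∑ m, ((‖S m i‖ ^ 2 : ℝ) : ℂ) := by
              exact Finset.sum_congr rfl fun m _ => conj_mul_norm _
          _ = ((∑ m, ‖S m i‖ ^ 2 : ℝ) : ℂ) := by push_cast; ring
          _ = 1 := by rw [hcols i]; norm_num
      simp only [hμ, one_pow, hAii, one_mul, Finset.sum_const, Finset.card_range,
        nsmul_eq_mul, mul_one]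
      have h1 : (1 : Matrix (Fin d) (Fin d) ℂ) i i = 1 := Matrix.one_apply_eq i
      rw [h1]
      apply Tendsto.congr' (f₁ := fun _ => (1 : ℂ))
      · filter_upwards [eventually_ge_atTop 1] with n hn
        have : (n : ℂ) ≠ 0 := by
          exact_mod_cast Nat.cast_ne_zero.mpr (by omega)
        field_simp
      · exact tendsto_const_nhds
    · have h1 : (1 : Matrix (Fin d) (Fin d) ℂ) i k = 0 := Matrix.one_apply_ne hik
      rw [h1]
      have hμnorm : ‖(starRingEnd ℂ) (lam i) * lam k‖ = 1 := by
        rw [norm_mul, RCLike.norm_conj, hlam i, hlam k, one_mul]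
      have hμne : (starRingEnd ℂ) (lam i) * lam k ≠ 1 := by
        intro h
        apply hik
        apply hdist
        have h2 : lam i * ((starRingEnd ℂ) (lam i) * lam k) = lam i := by rw [h, mul_one]
        rw [← mul_assoc, mul_comm (lam i), conj_mul_norm, hlam i] at h2
        simpa using h2.symm
      have := (cesaro_pow_zero _ hμnorm hμne).const_mul (A i k)
      simpa using this
  -- conclude by continuity of M ↦ (S⁻¹)ᴴ * M * S⁻¹
  have hcont : Continuous fun M : Matrix (Fin d) (Fin d) ℂ => (S⁻¹)ᴴ * M * S⁻¹ :=
    (continuous_const.matrix_mul continuous_id).matrix_mul continuous_const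
  have hfinal := (hcont.tendsto 1).comp hFlim
  have heq : (S⁻¹)ᴴ * (1 : Matrix (Fin d) (Fin d) ℂ) * S⁻¹ = (S * Sᴴ)⁻¹ := by
    rw [Matrix.mul_one, Matrix.mul_inv_rev, Matrix.conjTranspose_nonsing_inv]
  rw [heq] at hfinal
  exact hfinal
end

section
/- A positive definite d×d matrix A with eigenvalues t_1,…,t_d > 0 (counted with multiplicity) satisfies ∑_{j=1}^d 1/t_j = d if and only if there exists S ∈ GL_d(ℂ) whose columns are all unit vectors and A = (S S^*)^{-1}. -/
open scoped Matrix ComplexOrder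

open Complex Matrix in
/-- The unitary Fourier matrix. -/
noncomputable def fourierMat (d : ℕ) : Matrix (Fin d) (Fin d) ℂ :=
  fun i j => Complex.exp (2 * Real.pi * Complex.I / d) ^ ((i : ℕ) * (j : ℕ)) /
    (Real.sqrt d : ℝ)

open Complex Matrix in
lemma fourierMat_norm_sq {d : ℕ} (hd : d ≠ 0) (i j : Fin d) :
    ‖fourierMat d i j‖ ^ 2 = (d : ℝ)⁻¹ := by
  have hω : ‖Complex.exp (2 * Real.pi * Complex.I / d)‖ = 1 := by
    have : (2 * Real.pi * Complex.I / d) = ((2 * Real.pi / d : ℝ) : ℂ) * Complex.I := by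
      push_cast; ring
    rw [this, Complex.norm_exp_ofReal_mul_I]
  have hdpos : (0 : ℝ) < d := by positivity
  rw [fourierMat, norm_div, norm_pow, hω, one_pow, Complex.norm_real,
    Real.norm_eq_abs, _root_.abs_of_nonneg (Real.sqrt_nonneg _)]
  rw [div_pow, one_pow, Real.sq_sqrt hdpos.le, one_div]

open Complex Matrix in
lemma fourierMat_mul_conjTranspose {d : ℕ} (hd : d ≠ 0) :
    fourierMat d * (fourierMat d)ᴴ = 1 := by
  have hdpos : (0 : ℝ) < d := by positivity
  have hdC : (d : ℂ) ≠ 0 := Nat.cast_ne_zero.mpr hd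
  set ω : ℂ := Complex.exp (2 * Real.pi * Complex.I / d) with hω
  have hprim : IsPrimitiveRoot ω d := Complex.isPrimitiveRoot_exp d hd
  ext i k
  simp only [Matrix.mul_apply, Matrix.conjTranspose_apply, fourierMat, Matrix.one_apply]
  have hconj : ∀ j : Fin d, star (ω ^ ((k : ℕ) * (j : ℕ)) / (Real.sqrt d : ℝ))
      = (ω⁻¹) ^ ((k : ℕ) * (j : ℕ)) / (Real.sqrt d : ℝ) := by
    intro j
    have hc : (starRingEnd ℂ) (2 * Real.pi * Complex.I / d)
        = -(2 * Real.pi * Complex.I / d) := by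
      simp [map_div₀, Complex.conj_I, Complex.conj_ofNat]
      ring
    rw [Complex.star_def, map_div₀, map_pow, Complex.conj_ofReal, hω, ← Complex.exp_conj,
      hc, Complex.exp_neg]
  have key : ∀ j : Fin d, ω ^ ((i : ℕ) * (j : ℕ)) / (Real.sqrt d : ℝ) *
      ((ω⁻¹) ^ ((k : ℕ) * (j : ℕ)) / (Real.sqrt d : ℝ))
      = (ω ^ ((i : ℤ) - (k : ℤ))) ^ (j : ℕ) / d := by
    intro j
    have hs : ((Real.sqrt d : ℝ) : ℂ) * ((Real.sqrt d : ℝ) : ℂ) = (d : ℂ) := by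
      rw [← Complex.ofReal_mul, Real.mul_self_sqrt hdpos.le]; norm_cast
    have h1 : ω ^ ((i : ℕ) * (j : ℕ)) * (ω⁻¹) ^ ((k : ℕ) * (j : ℕ))
        = (ω ^ ((i : ℤ) - (k : ℤ))) ^ (j : ℕ) := by
      rw [← zpow_natCast ω ((i : ℕ) * (j : ℕ)), inv_pow, ← zpow_natCast ω ((k : ℕ) * (j : ℕ)),
        ← _root_.zpow_neg, ← zpow_add₀ (hprim.ne_zero hd), ← zpow_natCast (ω ^ ((i : ℤ) - (k : ℤ))),
        ← _root_.zpow_mul]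
      congr 1
      push_cast
      ring
    rw [div_mul_div_comm, hs, h1]
  rw [Finset.sum_congr rfl fun j _ => by rw [hconj j, key j], ← Finset.sum_div]
  by_cases hik : i = k
  · subst hik
    rw [if_pos rfl]
    rw [Finset.sum_congr rfl fun j _ => by rw [sub_self, zpow_zero, one_pow],
      Finset.sum_const, Finset.card_univ, Fintype.card_fin, nsmul_eq_mul, mul_one,
      div_self hdC]
  · rw [if_neg hik]
    have hζ1 : ω ^ ((i : ℤ) - (k : ℤ)) ≠ 1 := by
      intro h
      have hdvd := (hprim.zpow_eq_one_iff_dvd _).mp h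
      have habs : ((i : ℤ) - (k : ℤ)).natAbs < d := by omega
      have h0 := Int.eq_zero_of_dvd_of_natAbs_lt_natAbs hdvd habs
      exact hik (Fin.ext (by omega))
    have hζd : (ω ^ ((i : ℤ) - (k : ℤ))) ^ d = 1 := by
      rw [← zpow_natCast, ← _root_.zpow_mul, mul_comm, _root_.zpow_mul, zpow_natCast,
        hprim.pow_eq_one, _root_.one_zpow]
    have hsum : ∑ j : Fin d, (ω ^ ((i : ℤ) - (k : ℤ))) ^ (j : ℕ) = 0 := by
      rw [Fin.sum_univ_eq_sum_range (fun n => (ω ^ ((i : ℤ) - (k : ℤ))) ^ n),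
        geom_sum_eq hζ1, hζd, sub_self, zero_div]
    rw [hsum, zero_div]

/-- A positive definite `d × d` matrix `A` with eigenvalues `t_1, …, t_d` (with multiplicity)
satisfies `∑ 1/t_j = d` if and only if `A = (S S^*)⁻¹` for some invertible `S` whose columns
are all unit vectors. -/
theorem posdef_inverse_trace_char (d : ℕ) (A : Matrix (Fin d) (Fin d) ℂ)
    (hA : A.PosDef) :
    (∑ j : Fin d, (hA.1.eigenvalues j)⁻¹ = (d : ℝ)) ↔
      ∃ S : Matrix (Fin d) (Fin d) ℂ, IsUnit S ∧
        (∀ j : Fin d, ∑ i : Fin d, ‖S i j‖ ^ 2 = 1) ∧ A = (S * Sᴴ)⁻¹ := by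
  classical
  rcases Nat.eq_zero_or_pos d with hd0 | hdpos
  · subst hd0
    constructor
    · intro _
      exact ⟨1, isUnit_one, fun j => j.elim0, Subsingleton.elim _ _⟩
    · intro _
      simp
  have hd : d ≠ 0 := hdpos.ne'
  have hdR : (d : ℝ) ≠ 0 := Nat.cast_ne_zero.mpr hd
  set t : Fin d → ℝ := hA.1.eigenvalues with ht
  have htpos : ∀ j, 0 < t j := hA.eigenvalues_pos
  set U : Matrix (Fin d) (Fin d) ℂ := (hA.1.eigenvectorUnitary : Matrix (Fin d) (Fin d) ℂ)
    with hUdef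
  have hUU : Uᴴ * U = 1 := Matrix.UnitaryGroup.star_mul_self hA.1.eigenvectorUnitary
  have hUU' : U * Uᴴ = 1 := mul_eq_one_comm.mp hUU
  have hspec : A = U * Matrix.diagonal (fun j => ((t j : ℝ) : ℂ)) * Uᴴ :=
    hA.1.spectral_theorem
  have hAinv : A⁻¹ = U * Matrix.diagonal (fun j => (((t j)⁻¹ : ℝ) : ℂ)) * Uᴴ := by
    apply Matrix.inv_eq_right_inv
    conv_lhs => rw [hspec]
    calc U * Matrix.diagonal (fun j => ((t j : ℝ) : ℂ)) * Uᴴ *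
          (U * Matrix.diagonal (fun j => (((t j)⁻¹ : ℝ) : ℂ)) * Uᴴ)
        = U * (Matrix.diagonal (fun j => ((t j : ℝ) : ℂ)) * (Uᴴ * U) *
            Matrix.diagonal (fun j => (((t j)⁻¹ : ℝ) : ℂ))) * Uᴴ := by
          simp only [Matrix.mul_assoc]
      _ = 1 := by
          rw [hUU, Matrix.mul_one, Matrix.diagonal_mul_diagonal]
          have : (fun j => ((t j : ℝ) : ℂ) * (((t j)⁻¹ : ℝ) : ℂ)) = fun _ => (1 : ℂ) := by
            funext j
            rw [← Complex.ofReal_mul, mul_inv_cancel₀ (htpos j).ne']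
            norm_num
          rw [this, Matrix.diagonal_one, Matrix.mul_one, hUU']
  have htr : (A⁻¹).trace = ((∑ j, (t j)⁻¹ : ℝ) : ℂ) := by
    rw [hAinv, Matrix.trace_mul_comm, ← Matrix.mul_assoc, hUU, Matrix.one_mul,
      Matrix.trace_diagonal]
    push_cast
    rfl
  constructor
  · -- forward
    intro hsum
    set s : Fin d → ℝ := fun j => Real.sqrt (t j)⁻¹ with hs
    have hs2 : ∀ j, s j ^ 2 = (t j)⁻¹ := fun j =>
      Real.sq_sqrt (inv_nonneg.mpr (htpos j).le)
    set F := fourierMat d with hF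
    have hFF : F * Fᴴ = 1 := fourierMat_mul_conjTranspose hd
    set S := U * Matrix.diagonal (fun j => ((s j : ℝ) : ℂ)) * F with hSdef
    have hDH : (Matrix.diagonal (fun j => ((s j : ℝ) : ℂ)))ᴴ
        = Matrix.diagonal (fun j => ((s j : ℝ) : ℂ)) := by
      rw [Matrix.diagonal_conjTranspose]
      refine congrArg Matrix.diagonal (funext fun j => ?_)
      simp [Pi.star_apply, Complex.star_def, Complex.conj_ofReal]
    have hDD : Matrix.diagonal (fun j => ((s j : ℝ) : ℂ)) *
        Matrix.diagonal (fun j => ((s j : ℝ) : ℂ))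
        = Matrix.diagonal (fun j => (((t j)⁻¹ : ℝ) : ℂ)) := by
      rw [Matrix.diagonal_mul_diagonal]
      refine congrArg Matrix.diagonal (funext fun j => ?_)
      rw [← Complex.ofReal_mul, ← sq, hs2 j]
    have hSS : S * Sᴴ = A⁻¹ := by
      rw [hSdef, Matrix.conjTranspose_mul, Matrix.conjTranspose_mul, hDH, hAinv]
      calc U * Matrix.diagonal (fun j => ((s j : ℝ) : ℂ)) * F *
            (Fᴴ * (Matrix.diagonal (fun j => ((s j : ℝ) : ℂ)) * Uᴴ))
          = U * (Matrix.diagonal (fun j => ((s j : ℝ) : ℂ)) * (F * Fᴴ) *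
              Matrix.diagonal (fun j => ((s j : ℝ) : ℂ))) * Uᴴ := by
            simp only [Matrix.mul_assoc]
        _ = U * Matrix.diagonal (fun j => (((t j)⁻¹ : ℝ) : ℂ)) * Uᴴ := by
            rw [hFF, Matrix.mul_one, hDD]
    have hAunit : IsUnit (S * Sᴴ) := hSS ▸ hA.inv.isUnit
    have hSunit : IsUnit S := by
      have h1 : IsUnit (S * Sᴴ).det := (Matrix.isUnit_iff_isUnit_det _).mp hAunit
      rw [Matrix.det_mul] at h1
      exact (Matrix.isUnit_iff_isUnit_det _).mpr (isUnit_of_mul_isUnit_left h1)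
    refine ⟨S, hSunit, ?_, ?_⟩
    · intro j
      have hStS : Sᴴ * S = Fᴴ * (Matrix.diagonal (fun j => (((t j)⁻¹ : ℝ) : ℂ)) * F) := by
        rw [hSdef, Matrix.conjTranspose_mul, Matrix.conjTranspose_mul, hDH]
        calc Fᴴ * (Matrix.diagonal (fun j => ((s j : ℝ) : ℂ)) * Uᴴ) *
              (U * Matrix.diagonal (fun j => ((s j : ℝ) : ℂ)) * F)
            = Fᴴ * ((Matrix.diagonal (fun j => ((s j : ℝ) : ℂ)) * (Uᴴ * U) *
                Matrix.diagonal (fun j => ((s j : ℝ) : ℂ))) * F) := by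
              simp only [Matrix.mul_assoc]
          _ = Fᴴ * (Matrix.diagonal (fun j => (((t j)⁻¹ : ℝ) : ℂ)) * F) := by
              rw [hUU, Matrix.mul_one, hDD]
      have h1 : ((Sᴴ * S) j j) = ((∑ i, ‖S i j‖ ^ 2 : ℝ) : ℂ) := by
        rw [Matrix.mul_apply, Complex.ofReal_sum]
        refine Finset.sum_congr rfl fun i _ => ?_
        rw [Matrix.conjTranspose_apply, Complex.star_def, mul_comm, Complex.mul_conj,
          Complex.normSq_eq_norm_sq]
      have h2 : ((Sᴴ * S) j j) = 1 := by
        rw [hStS, Matrix.mul_apply]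
        have hterm : ∀ k, (Fᴴ) j k *
            ((Matrix.diagonal (fun j => (((t j)⁻¹ : ℝ) : ℂ)) * F) k j)
            = (((t k)⁻¹ * (d : ℝ)⁻¹ : ℝ) : ℂ) := by
          intro k
          rw [Matrix.diagonal_mul, Matrix.conjTranspose_apply, Complex.star_def]
          rw [show (starRingEnd ℂ) (F k j) * ((((t k)⁻¹ : ℝ) : ℂ) * F k j)
            = (((t k)⁻¹ : ℝ) : ℂ) * (F k j * (starRingEnd ℂ) (F k j)) by ring]
          rw [Complex.mul_conj, Complex.normSq_eq_norm_sq, hF,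
            fourierMat_norm_sq hd k j, ← Complex.ofReal_mul]
        rw [Finset.sum_congr rfl fun k _ => hterm k, ← Complex.ofReal_sum,
          ← Finset.sum_mul, hsum, mul_inv_cancel₀ hdR, Complex.ofReal_one]
      rw [h1] at h2
      exact_mod_cast h2
    · rw [hSS, Matrix.nonsing_inv_nonsing_inv A ((Matrix.isUnit_iff_isUnit_det A).mp hA.isUnit)]
  · -- reverse
    rintro ⟨S, hSu, hcol, hAeq⟩
    have hSSdet : IsUnit (S * Sᴴ).det := by
      rw [Matrix.det_mul, Matrix.det_conjTranspose]
      exact (((Matrix.isUnit_iff_isUnit_det S).mp hSu)).mul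
        (((Matrix.isUnit_iff_isUnit_det S).mp hSu)).star
    have hinv : A⁻¹ = S * Sᴴ := by
      rw [hAeq, Matrix.nonsing_inv_nonsing_inv _ hSSdet]
    have htr2 : (A⁻¹).trace = ((d : ℝ) : ℂ) := by
      rw [hinv, Matrix.trace]
      have hdiag : ∀ i, (S * Sᴴ).diag i = ((∑ j, ‖S i j‖ ^ 2 : ℝ) : ℂ) := by
        intro i
        rw [Matrix.diag_apply, Matrix.mul_apply, Complex.ofReal_sum]
        refine Finset.sum_congr rfl fun j _ => ?_
        rw [Matrix.conjTranspose_apply, Complex.star_def, Complex.mul_conj,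
          Complex.normSq_eq_norm_sq]
      rw [Finset.sum_congr rfl fun i _ => hdiag i, ← Complex.ofReal_sum, Finset.sum_comm]
      rw [Finset.sum_congr rfl fun j (_ : j ∈ Finset.univ) => hcol j]
      simp
    rw [htr] at htr2
    exact_mod_cast htr2
end

section
/- Given positive reals t_1,…,t_d with ∑_j 1/t_j = d, there exists an invertible d×d complex matrix S all of whose columns are unit vectors such that S S^* = diag(1/t_1,…,1/t_d). -/
open scoped Matrix

open Complex ZMod

lemma sum_stdAddChar_mul (d : ℕ) [NeZero d] (x : ZMod d) :
    ∑ k : ZMod d, ZMod.stdAddChar (x * k) = if x = 0 then (d : ℂ) else 0 := by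
  split_ifs with h
  · simp [h, ZMod.card]
  · have := AddChar.sum_eq_zero_of_ne_one (isPrimitive_stdAddChar d h)
    simpa [AddChar.mulShift_apply] using this

/-- Given positive reals `t_1, …, t_d` with `∑ 1/t_j = d`, there is an invertible complex
`d × d` matrix `S`, all of whose columns are unit vectors, with `S S^* = diag(1/t_1, …, 1/t_d)`. -/
theorem exists_unit_columns_diag (d : ℕ) (t : Fin d → ℝ) (ht : ∀ j, 0 < t j)
    (hsum : ∑ j : Fin d, (t j)⁻¹ = (d : ℝ)) :
    ∃ S : Matrix (Fin d) (Fin d) ℂ, IsUnit S ∧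
      (∀ j : Fin d, ∑ i : Fin d, ‖S i j‖ ^ 2 = 1) ∧
      S * Sᴴ = Matrix.diagonal (fun j => ((t j)⁻¹ : ℂ)) := by
  rcases Nat.eq_zero_or_pos d with hd | hd
  · subst hd
    exact ⟨1, isUnit_one, fun j => j.elim0, Subsingleton.elim _ _⟩
  have hdz : NeZero d := ⟨hd.ne'⟩
  have hdR : (0 : ℝ) < d := by exact_mod_cast hd
  set χ : AddChar (ZMod d) ℂ := ZMod.stdAddChar with hχ
  have hnorm : ∀ x : ZMod d, ‖χ x‖ = 1 := fun x => by
    rw [hχ, ZMod.stdAddChar_apply]; exact Circle.norm_coe _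
  have hconj : ∀ x : ZMod d, (starRingEnd ℂ) (χ x) = χ (-x) := fun x => by
    rw [hχ, ZMod.stdAddChar_apply, ZMod.stdAddChar_apply, AddChar.map_neg_eq_inv,
      Circle.coe_inv_eq_conj]
  set c : Fin d → ℝ := fun i => Real.sqrt ((t i)⁻¹ / d) with hc
  have hc2 : ∀ i, (c i) ^ 2 = (t i)⁻¹ / d := fun i =>
    Real.sq_sqrt (div_nonneg (inv_nonneg.2 (ht i).le) hdR.le)
  set S : Matrix (Fin d) (Fin d) ℂ :=
    fun i j => (c i : ℂ) * χ ((i.val : ZMod d) * (j.val : ZMod d)) with hS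
  have hcastinj : Function.Injective (fun i : Fin d => ((i.val : ZMod d))) := by
    intro i j hij
    have := congrArg ZMod.val hij
    simpa [ZMod.val_natCast_of_lt i.isLt, ZMod.val_natCast_of_lt j.isLt, Fin.ext_iff] using this
  have hbij : Function.Bijective (fun i : Fin d => ((i.val : ZMod d))) := by
    rw [Fintype.bijective_iff_injective_and_card]
    exact ⟨hcastinj, by simp [ZMod.card]⟩
  have hmul : S * Sᴴ = Matrix.diagonal (fun j => ((t j)⁻¹ : ℂ)) := by
    ext i j
    rw [Matrix.mul_apply]
    simp only [Matrix.conjTranspose_apply]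
    simp only [hS, RCLike.star_def, map_mul, hconj]
    have : ∀ k : Fin d,
        (c i : ℂ) * χ ((i.val : ZMod d) * (k.val : ZMod d)) *
          ((starRingEnd ℂ) (c j : ℂ) * χ (-((j.val : ZMod d) * (k.val : ZMod d)))) =
        (c i : ℂ) * (c j : ℂ) *
          χ (((i.val : ZMod d) - (j.val : ZMod d)) * (k.val : ZMod d)) := by
      intro k
      rw [Complex.conj_ofReal]
      rw [show (((i.val : ZMod d) - (j.val : ZMod d)) * (k.val : ZMod d)) =
        ((i.val : ZMod d) * (k.val : ZMod d)) + (-((j.val : ZMod d) * (k.val : ZMod d))) by ring]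
      rw [AddChar.map_add_eq_mul]
      ring
    rw [Finset.sum_congr rfl (fun k _ => this k), ← Finset.mul_sum]
    rw [Fintype.sum_bijective _ hbij
      (fun k : Fin d => χ (((i.val : ZMod d) - (j.val : ZMod d)) * (k.val : ZMod d)))
      (fun x : ZMod d => χ (((i.val : ZMod d) - (j.val : ZMod d)) * x)) (fun k => rfl)]
    rw [sum_stdAddChar_mul]
    rcases eq_or_ne i j with rfl | hij
    · have h0 : ((i.val : ZMod d) - (i.val : ZMod d)) = 0 := sub_self _
      rw [if_pos h0, Matrix.diagonal_apply_eq]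
      have : ((c i : ℂ) * (c i : ℂ)) = (((t i)⁻¹ / d : ℝ) : ℂ) := by
        rw [← Complex.ofReal_mul, ← sq, hc2]
      rw [this]
      have hd0 : (d : ℂ) ≠ 0 := by exact_mod_cast hd.ne'
      have ht0 : ((t i) : ℂ) ≠ 0 := by exact_mod_cast (ht i).ne'
      push_cast
      field_simp
    · have h0 : ((i.val : ZMod d) - (j.val : ZMod d)) ≠ 0 := by
        rw [sub_ne_zero]
        exact fun h => hij (hcastinj h)
      rw [if_neg h0, Matrix.diagonal_apply_ne _ hij, mul_zero]
  refine ⟨S, ?_, ?_, hmul⟩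
  · rw [Matrix.isUnit_iff_isUnit_det]
    have hdet : S.det * Sᴴ.det = (Matrix.diagonal (fun j => ((t j)⁻¹ : ℂ))).det := by
      rw [← Matrix.det_mul, hmul]
    have : (Matrix.diagonal (fun j => ((t j)⁻¹ : ℂ))).det ≠ 0 := by
      rw [Matrix.det_diagonal]
      apply Finset.prod_ne_zero_iff.mpr
      intro j _
      simp only [ne_eq, inv_eq_zero]
      exact_mod_cast (ht j).ne'
    have hne : S.det ≠ 0 := fun h => this (by rw [← hdet, h, zero_mul])
    exact isUnit_iff_ne_zero.mpr hne
  · intro j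
    have : ∀ i : Fin d, ‖S i j‖ ^ 2 = (t i)⁻¹ / d := by
      intro i
      rw [hS]
      simp only [norm_mul, hnorm, mul_one, Complex.norm_real, Real.norm_eq_abs, _root_.sq_abs, hc2]
    rw [Finset.sum_congr rfl (fun i _ => this i), ← Finset.sum_div, hsum, div_self hdR.ne']
end

section
/- Let T be an operator on ℂ^d of block upper-triangular form T = [[T_0, R],[0, T_1]] with respect to an orthogonal decomposition ℂ^d = H' ⊕ H'', where the spectral radius of T_0 is < 1 and T_1 is power-bounded. Then T is power-bounded, and its stable subspace {x : T^n x → 0} equals H' if moreover T_1^n x does not tend to 0 for any nonzero x ∈ H''. -/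
open Filter

open scoped Matrix Matrix.Norms.L2Operator

section BlockAux

variable {m n : Type*} [Fintype m] [Fintype n] [DecidableEq n]

private lemma euclid_coord_le (x : EuclideanSpace ℂ m) (i : m) : ‖x i‖ ≤ ‖x‖ := by
  rw [EuclideanSpace.norm_eq]
  rw [show ‖x i‖ = Real.sqrt (‖x i‖ ^ 2) from (Real.sqrt_sq (norm_nonneg _)).symm]
  exact Real.sqrt_le_sqrt <|
    Finset.single_le_sum (f := fun j => ‖x j‖ ^ 2) (fun j _ => sq_nonneg _) (Finset.mem_univ i)

private lemma euclid_norm_le_sum (x : EuclideanSpace ℂ m) : ‖x‖ ≤ ∑ i, ‖x i‖ := by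
  rw [EuclideanSpace.norm_eq]
  calc Real.sqrt (∑ i, ‖x i‖ ^ 2) ≤ Real.sqrt ((∑ i, ‖x i‖) ^ 2) :=
        Real.sqrt_le_sqrt (Finset.sum_sq_le_sq_sum_of_nonneg (fun i _ => norm_nonneg _))
    _ = ∑ i, ‖x i‖ := Real.sqrt_sq (Finset.sum_nonneg fun i _ => norm_nonneg _)

private lemma entry_le_norm (A : Matrix m n ℂ) (i : m) (j : n) : ‖A i j‖ ≤ ‖A‖ := by
  have h := A.l2_opNorm_mulVec (EuclideanSpace.single j 1)
  have hv : (A *ᵥ (EuclideanSpace.single j 1 : EuclideanSpace ℂ n)) = fun i => A i j := by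
    ext i
    simp [Matrix.mulVec, dotProduct, EuclideanSpace.single_apply]
  rw [hv, EuclideanSpace.norm_single, norm_one, mul_one] at h
  exact le_trans (euclid_coord_le ((EuclideanSpace.equiv m ℂ).symm fun i => A i j) i) h

private lemma norm_le_sum_entries (A : Matrix m n ℂ) : ‖A‖ ≤ ∑ i, ∑ j, ‖A i j‖ := by
  rw [Matrix.l2_opNorm_def]
  refine ContinuousLinearMap.opNorm_le_bound _
    (Finset.sum_nonneg fun i _ => Finset.sum_nonneg fun j _ => norm_nonneg _) fun x => ?_
  show ‖Matrix.toEuclideanLin A x‖ ≤ _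
  rw [Matrix.toEuclideanLin_apply]
  refine le_trans (euclid_norm_le_sum _) ?_
  rw [Finset.sum_mul]
  refine Finset.sum_le_sum fun i _ => ?_
  have h1 : (WithLp.toLp 2 (A *ᵥ x.ofLp)) i
      = ∑ j, A i j * x j := rfl
  rw [h1, Finset.sum_mul]
  refine le_trans (norm_sum_le _ _) (Finset.sum_le_sum fun j _ => ?_)
  rw [norm_mul]
  exact mul_le_mul_of_nonneg_left (euclid_coord_le x j) (norm_nonneg _)

private lemma summable_pow_norm {d : ℕ} (A : Matrix (Fin d) (Fin d) ℂ)
    (hA : spectralRadius ℂ A < 1) : Summable (fun n : ℕ => ‖A ^ n‖) := by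
  obtain ⟨c, hc1, hc2⟩ := exists_between hA
  have hct : c ≠ ⊤ := (hc2.trans_le le_top).ne
  set ρ : ℝ := c.toReal with hρ
  have hρ1 : ρ < 1 := by
    have := (ENNReal.toReal_lt_toReal hct (by norm_num)).mpr hc2
    simpa using this
  have hρ0 : 0 ≤ ρ := ENNReal.toReal_nonneg
  have hgel := spectrum.pow_norm_pow_one_div_tendsto_nhds_spectralRadius A
  have hev : ∀ᶠ n : ℕ in atTop, ENNReal.ofReal (‖A ^ n‖ ^ (1 / (n:ℝ))) < c :=
    hgel.eventually_lt_const hc1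
  obtain ⟨N, hN⟩ := eventually_atTop.mp hev
  have key : ∀ n, N + 1 ≤ n → ‖A ^ n‖ ≤ ρ ^ n := by
    intro n hn
    have hn0 : (0:ℝ) < n := by exact_mod_cast Nat.lt_of_lt_of_le (Nat.succ_pos N) hn
    have h1 : ‖A ^ n‖ ^ (1 / (n:ℝ)) < ρ := by
      have := hN n (le_trans (Nat.le_succ N) hn)
      rwa [ENNReal.ofReal_lt_iff_lt_toReal (by positivity) hct] at this
    have h2 : (‖A ^ n‖ ^ (1 / (n:ℝ))) ^ (n:ℕ) ≤ ρ ^ n :=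
      pow_le_pow_left₀ (by positivity) h1.le n
    calc ‖A ^ n‖ = (‖A ^ n‖ ^ (1 / (n:ℝ))) ^ (n:ℕ) := by
          rw [← Real.rpow_natCast (‖A ^ n‖ ^ (1 / (n:ℝ))) n, ← Real.rpow_mul (norm_nonneg _),
            one_div, inv_mul_cancel₀ hn0.ne', Real.rpow_one]
      _ ≤ ρ ^ n := h2
  rw [← summable_nat_add_iff (N + 1)]
  refine Summable.of_nonneg_of_le (fun n => norm_nonneg _)
    (fun n => key (n + (N+1)) (Nat.le_add_left _ _)) ?_
  simpa using ((summable_geometric_of_lt_one hρ0 hρ1).mul_left (ρ ^ (N+1))).congr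
    (fun n => by rw [← pow_add, add_comm])

end BlockAux

/-- A block upper-triangular matrix `T = [[T₀, R], [0, T₁]]` with `r(T₀) < 1` and `T₁`
power-bounded is itself power-bounded; moreover, if `T₁ⁿ x → 0` only for `x = 0`, then
the stable subspace `{x : Tⁿ x → 0}` of `T` is exactly the first summand `H'`. -/
theorem block_triangular_powerbounded_and_stable_subspace (l k : ℕ)
    (T₀ : Matrix (Fin l) (Fin l) ℂ) (hT₀ : spectralRadius ℂ T₀ < 1)
    (R : Matrix (Fin l) (Fin k) ℂ)
    (T₁ : Matrix (Fin k) (Fin k) ℂ) (hT₁ : ∃ M > 0, ∀ n : ℕ, ‖T₁ ^ n‖ < M)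
    (T : Matrix (Fin l ⊕ Fin k) (Fin l ⊕ Fin k) ℂ)
    (hT : T = Matrix.fromBlocks T₀ R 0 T₁) :
    (∃ M > 0, ∀ n : ℕ, ‖T ^ n‖ < M) ∧
      ((∀ x : Fin k → ℂ, x ≠ 0 →
          ¬ Tendsto (fun n : ℕ => (T₁ ^ n).mulVec x) atTop (nhds 0)) →
        {x : Fin l ⊕ Fin k → ℂ |
            Tendsto (fun n : ℕ => (T ^ n).mulVec x) atTop (nhds 0)} =
          {x : Fin l ⊕ Fin k → ℂ | ∀ j : Fin k, x (Sum.inr j) = 0}) := by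
  subst hT
  obtain ⟨M, hM0, hM⟩ := hT₁
  have hsum := summable_pow_norm T₀ hT₀
  set K : ℝ := ∑' n : ℕ, ‖T₀ ^ n‖ with hK
  have hK0 : 0 ≤ K := tsum_nonneg fun n => norm_nonneg _
  have hT0le : ∀ n, ‖T₀ ^ n‖ ≤ K := fun n => Summable.le_tsum hsum n (fun m _ => norm_nonneg _)
  set S : ℕ → Matrix (Fin l) (Fin k) ℂ :=
    fun n => ∑ i ∈ Finset.range n, T₀ ^ i * R * T₁ ^ (n - 1 - i) with hS
  -- the block formula for powers
  have hpow : ∀ n : ℕ, (Matrix.fromBlocks T₀ R 0 T₁) ^ n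
      = Matrix.fromBlocks (T₀ ^ n) (S n) 0 (T₁ ^ n) := by
    intro n
    induction n with
    | zero => simp [hS, ← Matrix.fromBlocks_one]
    | succ n ih =>
      have hSrec : S (n+1) = T₀ * S n + R * T₁ ^ n := by
        simp only [hS, Finset.sum_range_succ', pow_zero, one_mul, Nat.add_sub_cancel,
          Nat.sub_zero]
        rw [Matrix.mul_sum, Matrix.one_mul]
        congr 1
        refine Finset.sum_congr rfl fun i _ => ?_
        have h : n - 1 - i = n - (i + 1) := by omega
        rw [h, pow_succ', Matrix.mul_assoc, Matrix.mul_assoc, Matrix.mul_assoc]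
      rw [pow_succ', ih, Matrix.fromBlocks_multiply]
      simp [hSrec, pow_succ']
  -- norm bound on S n
  have hSle : ∀ n, ‖S n‖ ≤ ‖R‖ * M * K := by
    intro n
    refine le_trans (norm_sum_le _ _) ?_
    have hterm : ∀ i ∈ Finset.range n,
        ‖T₀ ^ i * R * T₁ ^ (n - 1 - i)‖ ≤ ‖T₀ ^ i‖ * (‖R‖ * M) := by
      intro i _
      calc ‖T₀ ^ i * R * T₁ ^ (n - 1 - i)‖ ≤ ‖T₀ ^ i * R‖ * ‖T₁ ^ (n - 1 - i)‖ :=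
            Matrix.l2_opNorm_mul _ _
        _ ≤ ‖T₀ ^ i‖ * ‖R‖ * M := by
            refine mul_le_mul (Matrix.l2_opNorm_mul _ _) (hM _).le (norm_nonneg _) ?_
            positivity
        _ = ‖T₀ ^ i‖ * (‖R‖ * M) := by ring
    refine le_trans (Finset.sum_le_sum hterm) ?_
    rw [← Finset.sum_mul]
    calc (∑ i ∈ Finset.range n, ‖T₀ ^ i‖) * (‖R‖ * M) ≤ K * (‖R‖ * M) := by
          refine mul_le_mul_of_nonneg_right ?_ (by positivity)
          exact Summable.sum_le_tsum _ (fun i _ => norm_nonneg _) hsum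
      _ = ‖R‖ * M * K := by ring
  set B : ℝ := K + ‖R‖ * M * K + M with hB
  have hRMK0 : 0 ≤ ‖R‖ * M * K := by positivity
  have hB0 : 0 < B := by
    have := norm_nonneg T₀
    simp only [hB]
    linarith
  have hbound : ∀ n, ‖(Matrix.fromBlocks T₀ R 0 T₁) ^ n‖ ≤ ((l + k) * (l + k) : ℝ) * B := by
    intro n
    refine le_trans (norm_le_sum_entries _) ?_
    have hentry : ∀ p q, ‖((Matrix.fromBlocks T₀ R 0 T₁) ^ n) p q‖ ≤ B := by
      intro p q
      rw [hpow n]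
      rcases p with i | i <;> rcases q with j | j
      · simp only [Matrix.fromBlocks_apply₁₁]
        have := le_trans (entry_le_norm (T₀ ^ n) i j) (hT0le n)
        simp only [hB]; linarith
      · simp only [Matrix.fromBlocks_apply₁₂]
        have := le_trans (entry_le_norm (S n) i j) (hSle n)
        simp only [hB]; linarith
      · simp only [Matrix.fromBlocks_apply₂₁, Matrix.zero_apply, norm_zero]
        exact hB0.le
      · simp only [Matrix.fromBlocks_apply₂₂]
        have := le_trans (entry_le_norm (T₁ ^ n) i j) (hM n).le
        simp only [hB]; linarith
    calc (∑ p, ∑ q, ‖((Matrix.fromBlocks T₀ R 0 T₁) ^ n) p q‖)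
        ≤ ∑ _p : Fin l ⊕ Fin k, ∑ _q : Fin l ⊕ Fin k, B :=
          Finset.sum_le_sum fun p _ => Finset.sum_le_sum fun q _ => hentry p q
      _ = ((l + k) * (l + k) : ℝ) * B := by
          simp [Finset.sum_const, Finset.card_univ, nsmul_eq_mul]
          ring
  constructor
  · refine ⟨((l + k) * (l + k) : ℝ) * B + 1, by positivity, fun n => ?_⟩
    exact lt_of_le_of_lt (hbound n) (lt_add_one _)
  · intro h1
    ext x
    simp only [Set.mem_setOf_eq]
    have hcomp2 : ∀ (n : ℕ) (j : Fin k),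
        (((Matrix.fromBlocks T₀ R 0 T₁) ^ n) *ᵥ x) (Sum.inr j)
          = ((T₁ ^ n) *ᵥ fun j' => x (Sum.inr j')) j := by
      intro n j
      rw [hpow n]
      simp [Matrix.mulVec, dotProduct, Fintype.sum_sum_type]
    constructor
    · intro hx
      by_contra hne
      push_neg at hne
      obtain ⟨j₀, hj₀⟩ := hne
      refine h1 (fun j' => x (Sum.inr j')) ?_ ?_
      · intro hzero
        exact hj₀ (congrFun hzero j₀)
      · rw [tendsto_pi_nhds]
        intro j
        have := (tendsto_pi_nhds.mp hx) (Sum.inr j)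
        simpa [hcomp2] using this
    · intro hx2
      have hx2' : (fun j' => x (Sum.inr j')) = 0 := funext hx2
      rw [tendsto_pi_nhds]
      rintro (i | j)
      · -- top component: T₀ ^ n *ᵥ x₁
        set x₁ : Fin l → ℂ := fun i' => x (Sum.inl i') with hx₁
        have hcomp1 : ∀ n : ℕ,
            (((Matrix.fromBlocks T₀ R 0 T₁) ^ n) *ᵥ x) (Sum.inl i) = ((T₀ ^ n) *ᵥ x₁) i := by
          intro n
          rw [hpow n]
          simp [Matrix.mulVec, dotProduct, Fintype.sum_sum_type, hx2, hx₁]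
        simp only [hcomp1, Pi.zero_apply]
        rw [tendsto_zero_iff_norm_tendsto_zero]
        set x₁e : EuclideanSpace ℂ (Fin l) := (WithLp.equiv 2 _).symm x₁ with hx₁e
        have hb2 : ∀ n : ℕ, ‖((T₀ ^ n) *ᵥ x₁) i‖ ≤ ‖T₀ ^ n‖ * ‖x₁e‖ := fun n =>
          le_trans (euclid_coord_le ((EuclideanSpace.equiv (Fin l) ℂ).symm ((T₀ ^ n) *ᵥ x₁)) i)
            ((T₀ ^ n).l2_opNorm_mulVec x₁e)
        have hlim : Tendsto (fun n : ℕ => ‖T₀ ^ n‖ * ‖x₁e‖) atTop (nhds 0) := by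
          simpa using (hsum.tendsto_atTop_zero).mul_const ‖x₁e‖
        exact squeeze_zero (fun n => norm_nonneg _) hb2 hlim
      · simp only [hcomp2, hx2', Matrix.mulVec_zero, Pi.zero_apply]
        exact tendsto_const_nhds
end

section
/- For T = [[0, R·E^*],[0, E^*]]^* acting on ℂ^l ⊕ ℂ^k (i.e., T^* = [[0, R E^*],[0, E^*]]) with E invertible, one has T^{*n}T^n = [[R E^{*n}E^n R^*, R E^{*n}E^n],[E^{*n}E^n R^*, E^{*n}E^n]] for all n ≥ 1; consequently if A_{E,C} = lim_n (1/n)∑_{j=1}^n E^{*j}E^j exists then A_{T,C} = [[R A_{E,C} R^*, R A_{E,C}],[A_{E,C} R^*, A_{E,C}]]. -/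
open Filter

open scoped Matrix

/-- For `T` with `T^* = [[0, R E^*], [0, E^*]]` (`E` invertible), one has
`T^{*n} T^n = [[R E^{*n}E^n R^*, R E^{*n}E^n], [E^{*n}E^n R^*, E^{*n}E^n]]` for `n ≥ 1`;
consequently, if the Cesàro asymptotic limit `A_E` of `E` exists, then the Cesàro
asymptotic limit of `T` is `[[R A_E R^*, R A_E], [A_E R^*, A_E]]`. -/
theorem block_form_asymptotic_limit (l k : ℕ)
    (E : Matrix (Fin k) (Fin k) ℂ) (hE : IsUnit E)
    (R : Matrix (Fin l) (Fin k) ℂ)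
    (T : Matrix (Fin l ⊕ Fin k) (Fin l ⊕ Fin k) ℂ)
    (hT : Tᴴ = Matrix.fromBlocks 0 (R * Eᴴ) 0 Eᴴ) :
    (∀ n : ℕ, 1 ≤ n →
        (T ^ n)ᴴ * T ^ n =
          Matrix.fromBlocks (R * ((E ^ n)ᴴ * E ^ n) * Rᴴ) (R * ((E ^ n)ᴴ * E ^ n))
            (((E ^ n)ᴴ * E ^ n) * Rᴴ) ((E ^ n)ᴴ * E ^ n)) ∧
      ∀ A : Matrix (Fin k) (Fin k) ℂ,
        Tendsto (fun n : ℕ =>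
            ((n : ℂ)⁻¹ • ∑ j ∈ Finset.range n, (E ^ (j + 1))ᴴ * E ^ (j + 1)))
          atTop (nhds A) →
        Tendsto (fun n : ℕ =>
            ((n : ℂ)⁻¹ • ∑ j ∈ Finset.range n, (T ^ (j + 1))ᴴ * T ^ (j + 1)))
          atTop (nhds (Matrix.fromBlocks (R * A * Rᴴ) (R * A) (A * Rᴴ) A)) := by
  have hTval : T = Matrix.fromBlocks 0 0 (E * Rᴴ) E := by
    have := congrArg Matrix.conjTranspose hT
    rw [Matrix.conjTranspose_conjTranspose] at this
    rw [this]
    simp [Matrix.fromBlocks_conjTranspose, Matrix.conjTranspose_mul]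
  have hpow : ∀ n : ℕ, T ^ (n + 1) = Matrix.fromBlocks 0 0 (E ^ (n + 1) * Rᴴ) (E ^ (n + 1)) := by
    intro n
    induction n with
    | zero => simpa using hTval
    | succ m ih =>
      rw [pow_succ, ih, hTval, Matrix.fromBlocks_multiply]
      simp [pow_succ, Matrix.mul_assoc]
  have hmain : ∀ n : ℕ, 1 ≤ n →
      (T ^ n)ᴴ * T ^ n =
        Matrix.fromBlocks (R * ((E ^ n)ᴴ * E ^ n) * Rᴴ) (R * ((E ^ n)ᴴ * E ^ n))
          (((E ^ n)ᴴ * E ^ n) * Rᴴ) ((E ^ n)ᴴ * E ^ n) := by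
    intro n hn
    obtain ⟨m, rfl⟩ : ∃ m, n = m + 1 := ⟨n - 1, by omega⟩
    rw [hpow m]
    simp [Matrix.fromBlocks_conjTranspose, Matrix.fromBlocks_multiply,
      Matrix.conjTranspose_mul, Matrix.mul_assoc]
  refine ⟨hmain, ?_⟩
  intro A hA
  let L : Matrix (Fin k) (Fin k) ℂ →ₗ[ℂ] Matrix (Fin l ⊕ Fin k) (Fin l ⊕ Fin k) ℂ :=
    { toFun := fun M => Matrix.fromBlocks (R * M * Rᴴ) (R * M) (M * Rᴴ) M
      map_add' := by
        intro M N
        simp [Matrix.fromBlocks_add, Matrix.mul_add, Matrix.add_mul]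
      map_smul' := by
        intro c M
        simp [Matrix.fromBlocks_smul, mul_smul_comm, smul_mul_assoc] }
  have hL : Continuous L := L.continuous_of_finiteDimensional
  have key := (hL.tendsto A).comp hA
  have heq : (fun n : ℕ =>
      ((n : ℂ)⁻¹ • ∑ j ∈ Finset.range n, (T ^ (j + 1))ᴴ * T ^ (j + 1))) =
      (fun M => L M) ∘ (fun n : ℕ =>
      ((n : ℂ)⁻¹ • ∑ j ∈ Finset.range n, (E ^ (j + 1))ᴴ * E ^ (j + 1))) := by
    funext n
    simp only [Function.comp_apply, map_smul, map_sum]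
    congr 1
    refine Finset.sum_congr rfl fun j _ => ?_
    exact hmain (j + 1) (by omega)
  rw [heq]
  exact key
end

section
/- Let A = [[R B R^*, R B],[B R^*, B]] be the block positive semi-definite matrix on ℂ^l ⊕ ℂ^k determined by a positive matrix B ∈ ℂ^{k×k} and R ∈ ℂ^{l×k}. Then the unitary X = [[I_l, R],[−R^*, I_k]] · [[(I_l+RR^*)^{−1/2}, 0],[0, (I_k+R^*R)^{−1/2}]] satisfies X^{-1} A X = 0_l ⊕ ((I_k+R^*R)^{1/2} B (I_k+R^*R)^{1/2}). -/
open scoped Matrix ComplexOrder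

private lemma fb_congr {l k : ℕ} {A A' : Matrix (Fin l) (Fin l) ℂ}
    {B B' : Matrix (Fin l) (Fin k) ℂ} {C C' : Matrix (Fin k) (Fin l) ℂ}
    {D D' : Matrix (Fin k) (Fin k) ℂ} (h1 : A = A') (h2 : B = B') (h3 : C = C')
    (h4 : D = D') : Matrix.fromBlocks A B C D = Matrix.fromBlocks A' B' C' D' := by
  subst h1 h2 h3 h4; rfl

/-- Let `A = [[R B R^*, R B], [B R^*, B]]` with `B` positive semi-definite, and let
`P = (I + R R^*)^{1/2}` and `Q = (I + R^* R)^{1/2}` be the positive square roots. Then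
`X = [[I, R], [-R^*, I]] · [[P⁻¹, 0], [0, Q⁻¹]]` is unitary and
`X⁻¹ A X = 0 ⊕ (Q B Q)`. -/
theorem block_diagonalization_of_asymptotic_limit (l k : ℕ)
    (B : Matrix (Fin k) (Fin k) ℂ) (hB : B.PosSemidef)
    (R : Matrix (Fin l) (Fin k) ℂ)
    (P : Matrix (Fin l) (Fin l) ℂ) (hP : P.PosDef) (hP2 : P ^ 2 = 1 + R * Rᴴ)
    (Q : Matrix (Fin k) (Fin k) ℂ) (hQ : Q.PosDef) (hQ2 : Q ^ 2 = 1 + Rᴴ * R)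
    (A : Matrix (Fin l ⊕ Fin k) (Fin l ⊕ Fin k) ℂ)
    (hA : A = Matrix.fromBlocks (R * B * Rᴴ) (R * B) (B * Rᴴ) B)
    (X : Matrix (Fin l ⊕ Fin k) (Fin l ⊕ Fin k) ℂ)
    (hX : X = Matrix.fromBlocks 1 R (-Rᴴ) 1 * Matrix.fromBlocks P⁻¹ 0 0 Q⁻¹) :
    X ∈ Matrix.unitaryGroup (Fin l ⊕ Fin k) ℂ ∧
      X⁻¹ * A * X = Matrix.fromBlocks 0 0 0 (Q * B * Q) := by
  have hPH : Pᴴ = P := hP.isHermitian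
  have hQH : Qᴴ = Q := hQ.isHermitian
  have hPiH : P⁻¹ᴴ = P⁻¹ := by rw [Matrix.conjTranspose_nonsing_inv, hPH]
  have hQiH : Q⁻¹ᴴ = Q⁻¹ := by rw [Matrix.conjTranspose_nonsing_inv, hQH]
  have hPi : P⁻¹ * P = 1 :=
    Matrix.nonsing_inv_mul P ((Matrix.isUnit_iff_isUnit_det P).1 hP.isUnit)
  have hPi' : P * P⁻¹ = 1 :=
    Matrix.mul_nonsing_inv P ((Matrix.isUnit_iff_isUnit_det P).1 hP.isUnit)
  have hQi : Q⁻¹ * Q = 1 :=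
    Matrix.nonsing_inv_mul Q ((Matrix.isUnit_iff_isUnit_det Q).1 hQ.isUnit)
  have hQi' : Q * Q⁻¹ = 1 :=
    Matrix.mul_nonsing_inv Q ((Matrix.isUnit_iff_isUnit_det Q).1 hQ.isUnit)
  have hXs : Xᴴ = Matrix.fromBlocks P⁻¹ 0 0 Q⁻¹ * Matrix.fromBlocks 1 (-R) Rᴴ 1 := by
    rw [hX, Matrix.conjTranspose_mul]
    congr 1 <;> simp [Matrix.fromBlocks_conjTranspose, hPiH, hQiH]
  have hPP : P⁻¹ * (P ^ 2 * P⁻¹) = 1 := by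
    rw [pow_two, show P⁻¹ * (P * P * P⁻¹) = P⁻¹ * P * (P * P⁻¹) from by noncomm_ring,
      hPi, hPi', Matrix.one_mul]
  have hQQ : Q⁻¹ * (Q ^ 2 * Q⁻¹) = 1 := by
    rw [pow_two, show Q⁻¹ * (Q * Q * Q⁻¹) = Q⁻¹ * Q * (Q * Q⁻¹) from by noncomm_ring,
      hQi, hQi', Matrix.one_mul]
  have hunit : Xᴴ * X = 1 := by
    rw [hXs, hX]
    have h1 : Matrix.fromBlocks (1 : Matrix (Fin l) (Fin l) ℂ) (-R) Rᴴ 1 *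
        Matrix.fromBlocks 1 R (-Rᴴ) 1 = Matrix.fromBlocks (P ^ 2) 0 0 (Q ^ 2) := by
      rw [Matrix.fromBlocks_multiply]
      exact fb_congr (by simp [hP2]) (by simp) (by simp) (by simp [hQ2, add_comm])
    calc Matrix.fromBlocks P⁻¹ 0 0 Q⁻¹ * Matrix.fromBlocks 1 (-R) Rᴴ 1 *
          (Matrix.fromBlocks 1 R (-Rᴴ) 1 * Matrix.fromBlocks P⁻¹ 0 0 Q⁻¹)
        = Matrix.fromBlocks P⁻¹ 0 0 Q⁻¹ *
            ((Matrix.fromBlocks 1 (-R) Rᴴ 1 * Matrix.fromBlocks 1 R (-Rᴴ) 1) *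
              Matrix.fromBlocks P⁻¹ 0 0 Q⁻¹) := by simp only [Matrix.mul_assoc]
      _ = 1 := by
          rw [h1, Matrix.fromBlocks_multiply, Matrix.fromBlocks_multiply,
            ← Matrix.fromBlocks_one]
          exact fb_congr (by simpa [Matrix.mul_assoc] using hPP) (by simp) (by simp)
            (by simpa [Matrix.mul_assoc] using hQQ)
  refine ⟨Matrix.mem_unitaryGroup_iff'.2 hunit, ?_⟩
  have hXinv : X⁻¹ = Xᴴ := Matrix.inv_eq_left_inv hunit
  have hAU : Matrix.fromBlocks (R * B * Rᴴ) (R * B) (B * Rᴴ) B *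
      Matrix.fromBlocks 1 R (-Rᴴ) 1 =
      Matrix.fromBlocks (0 : Matrix (Fin l) (Fin l) ℂ) (R * (B * Q ^ 2)) 0 (B * Q ^ 2) := by
    rw [Matrix.fromBlocks_multiply]
    refine fb_congr (by simp [Matrix.mul_assoc]) ?_ (by simp [Matrix.mul_assoc]) ?_
    · simp [hQ2, Matrix.mul_add, Matrix.mul_assoc, add_comm]
    · simp [hQ2, Matrix.mul_add, Matrix.mul_assoc, add_comm]
  have hUAU : Matrix.fromBlocks (1 : Matrix (Fin l) (Fin l) ℂ) (-R) Rᴴ 1 *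
      Matrix.fromBlocks (0 : Matrix (Fin l) (Fin l) ℂ) (R * (B * Q ^ 2)) 0 (B * Q ^ 2) =
      Matrix.fromBlocks 0 0 0 (Q ^ 2 * (B * Q ^ 2)) := by
    rw [Matrix.fromBlocks_multiply]
    refine fb_congr (by simp) (by simp [Matrix.mul_assoc]) (by simp) ?_
    simp [hQ2, Matrix.add_mul, Matrix.mul_add, Matrix.mul_assoc, add_comm, add_left_comm,
      add_assoc]
  have hQBQ : Q⁻¹ * (Q ^ 2 * (B * (Q ^ 2 * Q⁻¹))) = Q * (B * Q) := by
    rw [pow_two, show Q⁻¹ * (Q * Q * (B * (Q * Q * Q⁻¹)))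
        = Q⁻¹ * Q * (Q * (B * (Q * (Q * Q⁻¹)))) from by noncomm_ring,
      hQi, hQi', Matrix.one_mul, Matrix.mul_one]
  rw [hXinv, hXs, hX, hA]
  calc Matrix.fromBlocks P⁻¹ 0 0 Q⁻¹ * Matrix.fromBlocks 1 (-R) Rᴴ 1 *
        Matrix.fromBlocks (R * B * Rᴴ) (R * B) (B * Rᴴ) B *
        (Matrix.fromBlocks 1 R (-Rᴴ) 1 * Matrix.fromBlocks P⁻¹ 0 0 Q⁻¹)
      = Matrix.fromBlocks P⁻¹ 0 0 Q⁻¹ *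
          ((Matrix.fromBlocks 1 (-R) Rᴴ 1 *
            (Matrix.fromBlocks (R * B * Rᴴ) (R * B) (B * Rᴴ) B *
              Matrix.fromBlocks 1 R (-Rᴴ) 1)) *
            Matrix.fromBlocks P⁻¹ 0 0 Q⁻¹) := by simp only [Matrix.mul_assoc]
    _ = Matrix.fromBlocks 0 0 0 (Q * B * Q) := by
        rw [hAU, hUAU, Matrix.fromBlocks_multiply, Matrix.fromBlocks_multiply]
        exact fb_congr (by simp) (by simp) (by simp)
          (by simpa [Matrix.mul_assoc] using hQBQ)
end

section
/- Let T be a bounded operator on a complex Hilbert space H such that the Cesàro asymptotic limit A_{T,C} = weak-lim (1/n)∑_{j=1}^n T^{*j}T^j exists and is nonzero. Then ‖A_{T,C}‖ ≥ 1. -/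
open Filter

local notation "⟪" x ", " y "⟫" => @inner ℂ _ _ x y

private lemma inv_nat_tendsto_zero_c :
    Tendsto (fun n : ℕ => ((n : ℂ))⁻¹) atTop (nhds 0) := by
  have h : Tendsto (fun n : ℕ => ((n : ℝ))⁻¹) atTop (nhds 0) :=
    tendsto_inv_atTop_nhds_zero_nat
  have := (Complex.continuous_ofReal.tendsto 0).comp h
  simpa [Function.comp_def] using this

/-- If the Cesàro asymptotic limit `A = weak-lim (1/n) ∑_{j=1}^n T^{*j} T^j` of a bounded
operator `T` on a complex Hilbert space exists and is nonzero, then `‖A‖ ≥ 1`. -/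
theorem norm_cesaro_asymptotic_limit_ge_one
    {H : Type*} [NormedAddCommGroup H] [InnerProductSpace ℂ H] [CompleteSpace H]
    (T A : H →L[ℂ] H)
    (hA : ∀ x y : H,
      Tendsto (fun n : ℕ =>
          (n : ℂ)⁻¹ * ∑ j ∈ Finset.range n, ⟪(T ^ (j + 1)) x, (T ^ (j + 1)) y⟫)
        atTop (nhds ⟪A x, y⟫))
    (hA0 : A ≠ 0) :
    1 ≤ ‖A‖ := by
  -- Key invariance: ⟪A (T x), T y⟫ = ⟪A x, y⟫
  have key : ∀ x y : H, ⟪A (T x), T y⟫ = ⟪A x, y⟫ := by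
    intro x y
    set S : ℕ → ℂ := fun n => ∑ j ∈ Finset.range n, ⟪(T ^ (j + 1)) x, (T ^ (j + 1)) y⟫
      with hS
    have h1 : Tendsto (fun n : ℕ => (n : ℂ)⁻¹ * S n) atTop (nhds ⟪A x, y⟫) := hA x y
    have h2 := hA (T x) (T y)
    -- rewrite the sequence in h2
    have heq : ∀ n : ℕ, (n : ℂ)⁻¹ * ∑ j ∈ Finset.range n,
        ⟪(T ^ (j + 1)) (T x), (T ^ (j + 1)) (T y)⟫
        = (n : ℂ)⁻¹ * (S (n + 1) - ⟪T x, T y⟫) := by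
      intro n
      congr 1
      have hshift : S (n + 1) = (∑ j ∈ Finset.range n,
          ⟪(T ^ (j + 1 + 1)) x, (T ^ (j + 1 + 1)) y⟫) + ⟪(T ^ 1) x, (T ^ 1) y⟫ := by
        simpa [hS] using Finset.sum_range_succ' (fun j => ⟪(T ^ (j + 1)) x, (T ^ (j + 1)) y⟫) n
      have hpow : ∀ (j : ℕ) (z : H), (T ^ (j + 1)) (T z) = (T ^ (j + 2)) z := by
        intro j z
        rw [show T ^ (j + 2) = T ^ (j + 1) * T from pow_succ T (j + 1)]; rfl
      have hsum : ∑ j ∈ Finset.range n, ⟪(T ^ (j + 1)) (T x), (T ^ (j + 1)) (T y)⟫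
          = ∑ j ∈ Finset.range n, ⟪(T ^ (j + 1 + 1)) x, (T ^ (j + 1 + 1)) y⟫ :=
        Finset.sum_congr rfl fun j _ => by rw [hpow j x, hpow j y]
      rw [hsum, hshift]
      simp only [pow_one]
      ring
    have h2' : Tendsto (fun n : ℕ => (n : ℂ)⁻¹ * (S (n + 1) - ⟪T x, T y⟫)) atTop
        (nhds ⟪A (T x), T y⟫) := by
      refine h2.congr fun n => heq n
    -- show the same sequence tends to ⟪A x, y⟫
    have h3 : Tendsto (fun n : ℕ => ((n + 1 : ℕ) : ℂ)⁻¹ * S (n + 1)) atTop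
        (nhds ⟪A x, y⟫) := h1.comp (tendsto_add_atTop_nat 1)
    have hratio : Tendsto (fun n : ℕ => (n : ℂ)⁻¹ * ((n + 1 : ℕ) : ℂ)) atTop (nhds 1) := by
      have : Tendsto (fun n : ℕ => 1 + ((n : ℂ))⁻¹) atTop (nhds 1) := by
        simpa using tendsto_const_nhds.add inv_nat_tendsto_zero_c
      refine this.congr' ?_
      filter_upwards [eventually_gt_atTop 0] with n hn
      have hn' : (n : ℂ) ≠ 0 := Nat.cast_ne_zero.mpr hn.ne'
      push_cast
      field_simp
    have h4 : Tendsto (fun n : ℕ => (n : ℂ)⁻¹ * S (n + 1)) atTop (nhds ⟪A x, y⟫) := by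
      have := hratio.mul h3
      rw [one_mul] at this
      refine this.congr fun n => ?_
      have hne : ((n : ℂ) + 1) ≠ 0 := Nat.cast_add_one_ne_zero n
      push_cast
      rw [mul_assoc, ← mul_assoc ((n : ℂ) + 1), mul_inv_cancel₀ hne, one_mul]
    have h5 : Tendsto (fun n : ℕ => (n : ℂ)⁻¹ * (S (n + 1) - ⟪T x, T y⟫)) atTop
        (nhds ⟪A x, y⟫) := by
      have hc : Tendsto (fun n : ℕ => (n : ℂ)⁻¹ * ⟪T x, T y⟫) atTop (nhds 0) := by
        simpa using inv_nat_tendsto_zero_c.mul_const (⟪T x, T y⟫)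
      have := h4.sub hc
      simp only [sub_zero] at this
      refine this.congr fun n => by ring
    exact tendsto_nhds_unique h2' h5
  -- Iterate: ⟪A ((T^k) x), (T^k) x⟫ = ⟪A x, x⟫
  have keyk : ∀ (k : ℕ) (x : H), ⟪A ((T ^ k) x), (T ^ k) x⟫ = ⟪A x, x⟫ := by
    intro k
    induction k with
    | zero => intro x; simp
    | succ n ih =>
      intro x
      have h1 : (T ^ (n + 1)) x = (T ^ n) (T x) := by
        rw [pow_succ]; rfl
      rw [h1, ih (T x), key]
  by_contra hlt
  push_neg at hlt
  apply hA0
  -- Show ⟪A x, x⟫ = 0 for all x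
  have hzero : ∀ x : H, ⟪A x, x⟫ = 0 := by
    intro x
    set c : ℂ := ⟪A x, x⟫ with hc
    set r : ℕ → ℝ := fun n => (n : ℝ)⁻¹ * ∑ j ∈ Finset.range n, ‖(T ^ (j + 1)) x‖ ^ 2
      with hr
    have hreal : ∀ n : ℕ, (n : ℂ)⁻¹ * ∑ j ∈ Finset.range n,
        ⟪(T ^ (j + 1)) x, (T ^ (j + 1)) x⟫ = ((r n : ℝ) : ℂ) := by
      intro n
      have : ∀ j ∈ Finset.range n, ⟪(T ^ (j + 1)) x, (T ^ (j + 1)) x⟫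
          = ((‖(T ^ (j + 1)) x‖ ^ 2 : ℝ) : ℂ) := by
        intro j _
        rw [inner_self_eq_norm_sq_to_K]
        norm_cast
      rw [Finset.sum_congr rfl this, hr]
      push_cast
      ring
    have hlim : Tendsto (fun n : ℕ => ((r n : ℝ) : ℂ)) atTop (nhds c) :=
      (hA x x).congr hreal
    have hre : Tendsto r atTop (nhds c.re) := by
      have := (Complex.continuous_re.tendsto c).comp hlim
      simpa [Function.comp_def] using this
    have him : c.im = 0 := by
      have h1 : Tendsto (fun n : ℕ => ((r n : ℝ) : ℂ).im) atTop (nhds c.im) :=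
        (Complex.continuous_im.tendsto c).comp hlim
      have h2 : Tendsto (fun _ : ℕ => (0 : ℝ)) atTop (nhds c.im) := by
        simpa using h1
      exact tendsto_nhds_unique h2 tendsto_const_nhds
    have hrnonneg : ∀ n, 0 ≤ r n := by
      intro n
      apply mul_nonneg (by positivity)
      exact Finset.sum_nonneg fun j _ => by positivity
    have hcre_nonneg : 0 ≤ c.re := ge_of_tendsto' hre hrnonneg
    -- pointwise bound: c.re ≤ ‖A‖ * ‖T^(j+1) x‖^2
    have hbound : ∀ j : ℕ, c.re ≤ ‖A‖ * ‖(T ^ (j + 1)) x‖ ^ 2 := by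
      intro j
      have h1 : c = ⟪A ((T ^ (j + 1)) x), (T ^ (j + 1)) x⟫ := (keyk (j + 1) x).symm
      set y := (T ^ (j + 1)) x
      calc c.re ≤ ‖c‖ := Complex.re_le_norm c
        _ = ‖⟪A y, y⟫‖ := by rw [h1]
        _ ≤ ‖A y‖ * ‖y‖ := norm_inner_le_norm _ _
        _ ≤ (‖A‖ * ‖y‖) * ‖y‖ :=
            mul_le_mul_of_nonneg_right (A.le_opNorm y) (norm_nonneg y)
        _ = ‖A‖ * ‖y‖ ^ 2 := by ring
    have haux : ∀ n : ℕ, 0 < n → c.re ≤ ‖A‖ * r n := by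
      intro n hn
      have hsum : (n : ℝ) * c.re ≤ ‖A‖ * ∑ j ∈ Finset.range n, ‖(T ^ (j + 1)) x‖ ^ 2 := by
        rw [Finset.mul_sum]
        calc (n : ℝ) * c.re = ∑ _j ∈ Finset.range n, c.re := by
              simp [mul_comm]
          _ ≤ ∑ j ∈ Finset.range n, ‖A‖ * ‖(T ^ (j + 1)) x‖ ^ 2 :=
              Finset.sum_le_sum fun j _ => hbound j
      have hn' : (0 : ℝ) < n := Nat.cast_pos.mpr hn
      have h2 : c.re ≤ (‖A‖ * ∑ j ∈ Finset.range n, ‖(T ^ (j + 1)) x‖ ^ 2) / n := by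
        rw [le_div_iff₀ hn']
        linarith [hsum]
      calc c.re ≤ (‖A‖ * ∑ j ∈ Finset.range n, ‖(T ^ (j + 1)) x‖ ^ 2) / n := h2
        _ = ‖A‖ * r n := by rw [hr]; ring
    have hlim2 : Tendsto (fun n => ‖A‖ * r n) atTop (nhds (‖A‖ * c.re)) :=
      hre.const_mul ‖A‖
    have hfinal : c.re ≤ ‖A‖ * c.re := by
      refine ge_of_tendsto hlim2 ?_
      filter_upwards [eventually_gt_atTop 0] with n hn
      exact haux n hn
    have : c.re = 0 := by
      by_contra h
      have hpos : 0 < c.re := lt_of_le_of_ne hcre_nonneg (Ne.symm h)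
      have : ‖A‖ * c.re < 1 * c.re := by
        exact mul_lt_mul_of_pos_right hlt hpos
      rw [one_mul] at this
      exact absurd (hfinal.trans_lt this) (lt_irrefl _)
    exact Complex.ext this him
  have : A.toLinearMap = 0 := (inner_map_self_eq_zero A.toLinearMap).mp hzero
  ext v
  simpa using LinearMap.congr_fun this v
end

section
/- Let L be a Banach limit and T a power-bounded operator on a complex Hilbert space H with L-asymptotic limit A_{T,L} ≠ 0, where A_{T,L} is the positive operator with ⟨A_{T,L}x,y⟩ = L(⟨T^n x, T^n y⟩). Then ‖A_{T,L}‖ ≥ 1. -/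
open Filter BoundedContinuousFunction

local notation "⟪" x ", " y "⟫" => @inner ℂ _ _ x y

/-- If `L` is a Banach limit, `T` a power-bounded operator on a complex Hilbert space and
`A` its `L`-asymptotic limit (defined by `⟨A x, y⟩ = L(⟨Tⁿ x, Tⁿ y⟩)`), and `A ≠ 0`,
then `‖A‖ ≥ 1`. -/
theorem norm_L_asymptotic_limit_ge_one
    {H : Type*} [NormedAddCommGroup H] [InnerProductSpace ℂ H] [CompleteSpace H]
    (L : (ℕ →ᵇ ℂ) →L[ℂ] ℂ) (hL : IsBanachLimit L)
    (T : H →L[ℂ] H) (hpb : ∃ M > 0, ∀ n : ℕ, ‖T ^ n‖ < M)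
    (A : H →L[ℂ] H)
    (hA : ∀ (x y : H) (f : ℕ →ᵇ ℂ),
      (∀ n : ℕ, f n = ⟪(T ^ n) x, (T ^ n) y⟫) → L f = ⟪A x, y⟫)
    (hA0 : A ≠ 0) :
    1 ≤ ‖A‖ := by
  obtain ⟨M, hM0, hMn⟩ := hpb
  -- bounded sequences
  have hbdd : ∀ y : H, ∃ f : ℕ →ᵇ ℂ, ∀ n, f n = ⟪(T ^ n) y, (T ^ n) y⟫ := by
    intro y
    refine ⟨BoundedContinuousFunction.ofNormedAddCommGroup
      (fun n => ⟪(T ^ n) y, (T ^ n) y⟫) continuous_of_discreteTopology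
      (M ^ 2 * ‖y‖ ^ 2) (fun n => ?_), fun n => rfl⟩
    have h1 : ‖(T ^ n) y‖ ≤ M * ‖y‖ := by
      calc ‖(T ^ n) y‖ ≤ ‖T ^ n‖ * ‖y‖ := (T ^ n).le_opNorm y
        _ ≤ M * ‖y‖ := by gcongr; exact (hMn n).le
    calc ‖(⟪(T ^ n) y, (T ^ n) y⟫ : ℂ)‖ ≤ ‖(T ^ n) y‖ * ‖(T ^ n) y‖ :=
          norm_inner_le_norm _ _
      _ ≤ (M * ‖y‖) * (M * ‖y‖) := by
          have := norm_nonneg ((T ^ n) y); nlinarith [norm_nonneg y]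
      _ = M ^ 2 * ‖y‖ ^ 2 := by ring
  -- positivity of the quadratic form
  have hpos : ∀ y : H, ∃ s : ℝ, 0 ≤ s ∧ ⟪A y, y⟫ = (s : ℂ) := by
    intro y
    obtain ⟨f, hf⟩ := hbdd y
    obtain ⟨s, hs0, hs⟩ := hL.positive f (fun n =>
      ⟨‖(T ^ n) y‖ ^ 2, sq_nonneg _, by
        rw [hf n, inner_self_eq_norm_sq_to_K]; norm_cast⟩)
    exact ⟨s, hs0, by rw [← hA y y f hf, hs]⟩
  -- shift invariance
  have hshift : ∀ y : H, ⟪A (T y), T y⟫ = ⟪A y, y⟫ := by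
    intro y
    obtain ⟨f, hf⟩ := hbdd y
    have h1 : L f = ⟪A y, y⟫ := hA y y f hf
    have h2 : L (f.compContinuous ⟨fun n => n + 1, continuous_of_discreteTopology⟩)
        = ⟪A (T y), T y⟫ := by
      refine hA (T y) (T y) _ (fun n => ?_)
      have : f (n + 1) = ⟪(T ^ n) (T y), (T ^ n) (T y)⟫ := by
        rw [hf (n + 1), pow_succ]; rfl
      exact this
    rw [← h1, ← h2, hL.shift_invariant]
  have hiter : ∀ (y : H) (n : ℕ), ⟪A ((T ^ n) y), (T ^ n) y⟫ = ⟪A y, y⟫ := by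
    intro y n
    induction n with
    | zero => simp
    | succ k ih =>
      have : (T ^ (k + 1)) y = T ((T ^ k) y) := by rw [pow_succ']; rfl
      rw [this, hshift, ih]
  -- find x with positive quadratic form
  have hx : ∃ x : H, ⟪A x, x⟫ ≠ 0 := by
    by_contra h
    push_neg at h
    apply hA0
    have := (inner_map_self_eq_zero (A : H →ₗ[ℂ] H)).mp (fun x => h x)
    ext x
    exact congrFun (congrArg (fun g => g.toFun) this) x
  obtain ⟨x, hx0⟩ := hx
  obtain ⟨s, hs0, hs⟩ := hpos x
  have hspos : 0 < s := by
    rcases hs0.lt_or_eq with h | h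
    · exact h
    · exact absurd (by rw [hs, ← h]; norm_num) hx0
  -- the key nonnegative sequence
  obtain ⟨f, hf⟩ := hbdd x
  set g : ℕ →ᵇ ℂ := (‖A‖ : ℂ) • f - BoundedContinuousFunction.const ℕ (s : ℂ) with hg
  have hgn : ∀ n, ∃ r : ℝ, 0 ≤ r ∧ g n = (r : ℂ) := by
    intro n
    refine ⟨‖A‖ * ‖(T ^ n) x‖ ^ 2 - s, ?_, ?_⟩
    · have h1 : (s : ℂ) = ⟪A ((T ^ n) x), (T ^ n) x⟫ := by rw [hiter, hs]
      have h2 : s ≤ ‖A‖ * ‖(T ^ n) x‖ ^ 2 := by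
        have : s = ‖(⟪A ((T ^ n) x), (T ^ n) x⟫ : ℂ)‖ := by
          rw [← h1, Complex.norm_real, Real.norm_of_nonneg hs0]
        rw [this]
        calc ‖(⟪A ((T ^ n) x), (T ^ n) x⟫ : ℂ)‖
            ≤ ‖A ((T ^ n) x)‖ * ‖(T ^ n) x‖ := norm_inner_le_norm _ _
          _ ≤ (‖A‖ * ‖(T ^ n) x‖) * ‖(T ^ n) x‖ := by
              gcongr; exact A.le_opNorm _
          _ = ‖A‖ * ‖(T ^ n) x‖ ^ 2 := by ring
      linarith
    · show ((‖A‖ : ℂ) • f - BoundedContinuousFunction.const ℕ (s : ℂ)) n = _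
      simp only [BoundedContinuousFunction.coe_sub, BoundedContinuousFunction.coe_smul,
        BoundedContinuousFunction.const_apply, Pi.sub_apply, Pi.smul_apply]
      rw [hf n, inner_self_eq_norm_sq_to_K, smul_eq_mul]
      push_cast
      rfl
  obtain ⟨t, ht0, ht⟩ := hL.positive g hgn
  have hLconst : L (BoundedContinuousFunction.const ℕ (s : ℂ)) = (s : ℂ) :=
    hL.tendsto_imp _ _ tendsto_const_nhds
  have hLf : L f = (s : ℂ) := by rw [hA x x f hf, hs]
  have hLg : L g = (‖A‖ : ℂ) * s - s := by
    rw [hg, map_sub, map_smul, hLf, hLconst, smul_eq_mul]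
  have hreal : ‖A‖ * s - s = t := by
    have : ((‖A‖ * s - s : ℝ) : ℂ) = (t : ℂ) := by rw [← ht, hLg]; push_cast; ring
    exact_mod_cast this
  nlinarith
end
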